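/- arXiv:1702.00121 — 3 statements merged into one kernel-verified Lean document; each statement's English description precedes it below -/
import Mathlib

section
/- Let ℓ be an odd prime. The set of indices [N_s(ℓ) : G] over subgroups G of N_s(ℓ) that belong to the nonsplit Cartan C_ns(ℓ) equals the set of positive integers divisible by ℓ−1 and dividing (ℓ−1)²/2^{ν₂(ℓ−1)}, where ν₂ denotes the 2-adic valuation. -/
open Matrix

abbrev GL2 (ℓ : ℕ) : Type := GL (Fin 2) (ZMod ℓ)

namespace Paper

/-- The underlying matrix of an element of `GL₂(ℤ/ℓℤ)`. -/
def mat {ℓ : ℕ} (g : GL2 ℓ) : Matrix (Fin 2) (Fin 2) (ZMod ℓ) := ↑g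

/-- The set of scalar matrices `Z(ℓ)`. -/
def ZSet (ℓ : ℕ) : Set (GL2 ℓ) :=
  { g | ∃ x : ZMod ℓ, mat g = x • (1 : Matrix (Fin 2) (Fin 2) (ZMod ℓ)) }

/-- The split Cartan `C_s(ℓ)`: invertible diagonal matrices. -/
def CsSet (ℓ : ℕ) : Set (GL2 ℓ) := { g | mat g 0 1 = 0 ∧ mat g 1 0 = 0 }

/-- The normalizer `N_s(ℓ)` of the split Cartan: diagonal and antidiagonal matrices. -/
def NsSet (ℓ : ℕ) : Set (GL2 ℓ) :=
  CsSet ℓ ∪ { g | mat g 0 0 = 0 ∧ mat g 1 1 = 0 }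

/-- The nonsplit Cartan `C_ns(ℓ)` relative to the nonsquare `ε`. -/
def CnsSet (ℓ : ℕ) (ε : ZMod ℓ) : Set (GL2 ℓ) :=
  { g | ∃ x y : ZMod ℓ, mat g = !![x, ε * y; y, x] }

/-- The normalizer `N_ns(ℓ)` of the nonsplit Cartan. -/
def NnsSet (ℓ : ℕ) (ε : ZMod ℓ) : Set (GL2 ℓ) :=
  CnsSet ℓ ε ∪ { g | ∃ x y : ZMod ℓ, mat g = !![x, -(ε * y); y, -x] }

/-- The ramified Cartan `C_r(ℓ)`. -/
def CrSet (ℓ : ℕ) : Set (GL2 ℓ) :=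
  { g | mat g 1 0 = 0 ∧ mat g 0 0 = mat g 1 1 }

/-- The Borel subgroup `B(ℓ)`: upper triangular matrices. -/
def BorelSet (ℓ : ℕ) : Set (GL2 ℓ) := { g | mat g 1 0 = 0 }

/-- `G` is conjugate in `GL₂(ℤ/ℓℤ)` to a subgroup of the set `M`. -/
def ConjSub {ℓ : ℕ} (G : Subgroup (GL2 ℓ)) (M : Set (GL2 ℓ)) : Prop :=
  ∃ a : GL2 ℓ, ∀ g ∈ G, a * g * a⁻¹ ∈ M

/-- `G` belongs to `Z(ℓ)`. -/
def BelongsZ {ℓ : ℕ} (G : Subgroup (GL2 ℓ)) : Prop := ConjSub G (ZSet ℓ)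

/-- `G` belongs to `C_s(ℓ)`. -/
def BelongsCs {ℓ : ℕ} (G : Subgroup (GL2 ℓ)) : Prop :=
  ConjSub G (CsSet ℓ) ∧ ¬ ConjSub G (ZSet ℓ)

/-- `G` belongs to `C_ns(ℓ)`. -/
def BelongsCns {ℓ : ℕ} (ε : ZMod ℓ) (G : Subgroup (GL2 ℓ)) : Prop :=
  ConjSub G (CnsSet ℓ ε) ∧ ¬ ConjSub G (ZSet ℓ)

/-- `G` belongs to `N_s(ℓ)`. -/
def BelongsNs {ℓ : ℕ} (G : Subgroup (GL2 ℓ)) : Prop :=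
  ConjSub G (NsSet ℓ) ∧ ¬ ConjSub G (CsSet ℓ)

/-- `G` belongs to `N_ns(ℓ)`. -/
def BelongsNns {ℓ : ℕ} (ε : ZMod ℓ) (G : Subgroup (GL2 ℓ)) : Prop :=
  ConjSub G (NnsSet ℓ ε) ∧ ¬ ConjSub G (CnsSet ℓ ε)

/-- `G` belongs to the ramified Cartan `C_r(ℓ)`. -/
def BelongsCr {ℓ : ℕ} (G : Subgroup (GL2 ℓ)) : Prop :=
  ConjSub G (CrSet ℓ) ∧ ¬ ConjSub G (ZSet ℓ)

/-- `H` is a twist of `G`: either `H = ⟨G, -I⟩`, or `H` is an index-2 subgroup of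
`⟨G, -I⟩` not containing `-I`. -/
def TwistOf {ℓ : ℕ} (G H : Subgroup (GL2 ℓ)) : Prop :=
  H = G ⊔ Subgroup.closure {(-1 : GL2 ℓ)} ∨
    (H ≤ G ⊔ Subgroup.closure {(-1 : GL2 ℓ)} ∧
      H.relIndex (G ⊔ Subgroup.closure {(-1 : GL2 ℓ)}) = 2 ∧
      (-1 : GL2 ℓ) ∉ H)

/-- `H` fixes a nonzero vector of `(ℤ/ℓℤ)²`. -/
def FixesVec {ℓ : ℕ} (H : Subgroup (GL2 ℓ)) : Prop :=
  ∃ v : Fin 2 → ZMod ℓ, v ≠ 0 ∧ ∀ h ∈ H, Matrix.mulVec (mat h) v = v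

end Paper

namespace Paper

set_option linter.unusedSectionVars false
variable {ℓ : ℕ} [Fact (Nat.Prime ℓ)]

lemma mat_mul (a b : GL2 ℓ) : mat (a * b) = mat a * mat b := rfl
lemma mat_one : mat (1 : GL2 ℓ) = 1 := rfl

lemma fin2_ext {α : Type*} {a b c d a' b' c' d' : α} (h1 : a = a') (h2 : b = b')
    (h3 : c = c') (h4 : d = d') : !![a, b; c, d] = !![a', b'; c', d'] := by
  subst h1 h2 h3 h4; rfl

def dia (p q : (ZMod ℓ)ˣ) : GL2 ℓ :=
  ⟨!![(p : ZMod ℓ), 0; 0, q], !![((p⁻¹ : (ZMod ℓ)ˣ) : ZMod ℓ), 0; 0, (q⁻¹ : (ZMod ℓ)ˣ)],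
   by simp [Matrix.mul_fin_two, Matrix.one_fin_two, Units.mul_inv, Units.inv_mul, -ZMod.inv_coe_unit],
   by simp [Matrix.mul_fin_two, Matrix.one_fin_two, Units.mul_inv, Units.inv_mul, -ZMod.inv_coe_unit]⟩

def adia (b c : (ZMod ℓ)ˣ) : GL2 ℓ :=
  ⟨!![0, (b : ZMod ℓ); c, 0], !![0, ((c⁻¹ : (ZMod ℓ)ˣ) : ZMod ℓ); (b⁻¹ : (ZMod ℓ)ˣ), 0],
   by simp [Matrix.mul_fin_two, Matrix.one_fin_two, Units.mul_inv, Units.inv_mul, -ZMod.inv_coe_unit],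
   by simp [Matrix.mul_fin_two, Matrix.one_fin_two, Units.mul_inv, Units.inv_mul, -ZMod.inv_coe_unit]⟩

lemma mat_dia (p q : (ZMod ℓ)ˣ) : mat (dia p q) = !![(p : ZMod ℓ), 0; 0, q] := rfl
lemma mat_adia (b c : (ZMod ℓ)ˣ) : mat (adia b c) = !![0, (b : ZMod ℓ); c, 0] := rfl
lemma mat_dia_inv (p q : (ZMod ℓ)ˣ) :
    mat (dia p q)⁻¹ = !![((p⁻¹ : (ZMod ℓ)ˣ) : ZMod ℓ), 0; 0, (q⁻¹ : (ZMod ℓ)ˣ)] := rfl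
lemma mat_adia_inv (b c : (ZMod ℓ)ˣ) :
    mat (adia b c)⁻¹ = !![0, ((c⁻¹ : (ZMod ℓ)ˣ) : ZMod ℓ); (b⁻¹ : (ZMod ℓ)ˣ), 0] := rfl

lemma isUnit_det (g : GL2 ℓ) : IsUnit ((mat g).det) :=
  (Matrix.isUnit_iff_isUnit_det _).mp g.isUnit

lemma units_of_diag {g : GL2 ℓ} (h01 : mat g 0 1 = 0) (h10 : mat g 1 0 = 0) :
    ∃ p q : (ZMod ℓ)ˣ, g = dia p q := by
  have hdet := isUnit_det g
  rw [Matrix.det_fin_two, h01, h10, mul_zero, sub_zero] at hdet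
  obtain ⟨hp, hq⟩ := IsUnit.mul_iff.mp hdet
  refine ⟨hp.unit, hq.unit, Units.ext ?_⟩
  show mat g = mat (dia hp.unit hq.unit)
  rw [mat_dia, hp.unit_spec, hq.unit_spec]
  conv_lhs => rw [Matrix.eta_fin_two (mat g)]
  rw [h01, h10]

lemma units_of_antidiag {g : GL2 ℓ} (h00 : mat g 0 0 = 0) (h11 : mat g 1 1 = 0) :
    ∃ b c : (ZMod ℓ)ˣ, g = adia b c := by
  have hdet := isUnit_det g
  rw [Matrix.det_fin_two, h00, h11, zero_mul, zero_sub, IsUnit.neg_iff _] at hdet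
  obtain ⟨hb, hc⟩ := IsUnit.mul_iff.mp hdet
  refine ⟨hb.unit, hc.unit, Units.ext ?_⟩
  show mat g = mat (adia hb.unit hc.unit)
  rw [mat_adia, hb.unit_spec, hc.unit_spec]
  conv_lhs => rw [Matrix.eta_fin_two (mat g)]
  rw [h00, h11]


lemma mem_Ns_iff {Ns : Subgroup (GL2 ℓ)} (hNs : (Ns : Set (GL2 ℓ)) = NsSet ℓ) (g : GL2 ℓ) :
    g ∈ Ns ↔ (mat g 0 1 = 0 ∧ mat g 1 0 = 0) ∨ (mat g 0 0 = 0 ∧ mat g 1 1 = 0) := by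
  rw [← SetLike.mem_coe, hNs]; rfl

lemma natCard_units : Nat.card (ZMod ℓ)ˣ = ℓ - 1 := by
  rw [Nat.card_eq_fintype_card, ZMod.card_units]

lemma card_Ns {Ns : Subgroup (GL2 ℓ)} (hNs : (Ns : Set (GL2 ℓ)) = NsSet ℓ) :
    Nat.card Ns = 2 * (ℓ - 1) ^ 2 := by
  have hdmem : ∀ p q : (ZMod ℓ)ˣ, dia p q ∈ Ns := fun p q => by
    rw [mem_Ns_iff hNs]; left; exact ⟨rfl, rfl⟩
  have hamem : ∀ p q : (ZMod ℓ)ˣ, adia p q ∈ Ns := fun p q => by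
    rw [mem_Ns_iff hNs]; right; exact ⟨rfl, rfl⟩
  let f : (ZMod ℓ)ˣ × (ZMod ℓ)ˣ × Bool → Ns := fun x =>
    if x.2.2 then ⟨adia x.1 x.2.1, hamem _ _⟩ else ⟨dia x.1 x.2.1, hdmem _ _⟩
  have hbij : Function.Bijective f := by
    constructor
    · rintro ⟨p, q, b⟩ ⟨p', q', b'⟩ h
      have h' := congrArg Subtype.val h
      simp only [f] at h'
      cases b <;> cases b' <;>
        simp only [if_true, if_false, Bool.false_eq_true, ite_true, ite_false] at h'
      · have e00 : (p : ZMod ℓ) = p' := congrArg (fun u : GL2 ℓ => mat u 0 0) h'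
        have e11 : (q : ZMod ℓ) = q' := congrArg (fun u : GL2 ℓ => mat u 1 1) h'
        simp [Prod.ext_iff, Units.ext_iff, e00, e11]
      · have e00 : (p : ZMod ℓ) = 0 := congrArg (fun u : GL2 ℓ => mat u 0 0) h'
        exact absurd e00 p.ne_zero
      · have e00 : (0 : ZMod ℓ) = p' := congrArg (fun u : GL2 ℓ => mat u 0 0) h'
        exact absurd e00.symm p'.ne_zero
      · have e01 : (p : ZMod ℓ) = p' := congrArg (fun u : GL2 ℓ => mat u 0 1) h'
        have e10 : (q : ZMod ℓ) = q' := congrArg (fun u : GL2 ℓ => mat u 1 0) h'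
        simp [Prod.ext_iff, Units.ext_iff, e01, e10]
    · rintro ⟨g, hg⟩
      rcases (mem_Ns_iff hNs g).mp hg with ⟨h01, h10⟩ | ⟨h00, h11⟩
      · obtain ⟨p, q, rfl⟩ := units_of_diag h01 h10
        exact ⟨(p, q, false), rfl⟩
      · obtain ⟨b, c, rfl⟩ := units_of_antidiag h00 h11
        exact ⟨(b, c, true), rfl⟩
  rw [← Nat.card_eq_of_bijective f hbij, Nat.card_prod, Nat.card_prod, natCard_units,
    Nat.card_eq_fintype_card, Fintype.card_bool]
  ring

lemma relindex_mul_card {G N : Subgroup (GL2 ℓ)} (h : G ≤ N) :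
    G.relIndex N * Nat.card G = Nat.card N := by
  have h2 := Subgroup.card_mul_index (G.subgroupOf N)
  have h3 : Nat.card (G.subgroupOf N) = Nat.card G :=
    Nat.card_congr (Subgroup.subgroupOfEquivOfLe h).toEquiv
  rw [h3] at h2
  rw [Subgroup.relIndex, mul_comm]
  exact h2

lemma trace_conj (a g : GL2 ℓ) : (mat (a * g * a⁻¹)).trace = (mat g).trace := by
  have h : mat (a * g * a⁻¹) = mat a * mat g * mat a⁻¹ := rfl
  rw [h, Matrix.trace_mul_cycle, ← mat_mul, inv_mul_cancel, mat_one, one_mul]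

lemma det_conj (a g : GL2 ℓ) : (mat (a * g * a⁻¹)).det = (mat g).det := by
  have h : mat (a * g * a⁻¹) = mat a * mat g * mat a⁻¹ := rfl
  have h1 : (mat a⁻¹).det * (mat a).det = 1 := by
    rw [← Matrix.det_mul, ← mat_mul, inv_mul_cancel, mat_one, Matrix.det_one]
  rw [h, Matrix.det_mul, Matrix.det_mul]
  linear_combination (mat g).det * h1

lemma conj_cns {a g : GL2 ℓ} {ε : ZMod ℓ}
    (h : ∃ x y : ZMod ℓ, mat (a * g * a⁻¹) = !![x, ε * y; y, x]) :
    ∃ w : ZMod ℓ, (mat g).trace ^ 2 - 4 * (mat g).det = ε * w ^ 2 := by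
  obtain ⟨x, y, hm⟩ := h
  have ht := trace_conj a g
  have hd := det_conj a g
  rw [hm] at ht hd
  refine ⟨2 * y, ?_⟩
  rw [← ht, ← hd, Matrix.trace_fin_two, Matrix.det_fin_two]
  show (x + x) ^ 2 - 4 * (x * x - ε * y * y) = ε * (2 * y) ^ 2
  ring

lemma diag_scalar {ε : ZMod ℓ} (hε : ∀ t : ZMod ℓ, t ^ 2 ≠ ε) {a g : GL2 ℓ}
    (hcns : ∃ x y : ZMod ℓ, mat (a * g * a⁻¹) = !![x, ε * y; y, x])
    (h01 : mat g 0 1 = 0) (h10 : mat g 1 0 = 0) : ∃ z : (ZMod ℓ)ˣ, g = dia z z := by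
  obtain ⟨p, q, rfl⟩ := units_of_diag h01 h10
  obtain ⟨w, hw⟩ := conj_cns hcns
  rw [mat_dia, Matrix.trace_fin_two, Matrix.det_fin_two] at hw
  have hw' : ((p : ZMod ℓ) + q) ^ 2 - 4 * ((p : ZMod ℓ) * q - 0 * 0) = ε * w ^ 2 := hw
  have hpq : (q : ZMod ℓ) = p := by
    by_cases hw0 : w = 0
    · subst hw0
      have h2 : ((p : ZMod ℓ) - q) ^ 2 = 0 := by linear_combination hw'
      have h3 := pow_eq_zero_iff (n := 2) (by norm_num) |>.mp h2
      linear_combination -h3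
    · exfalso
      refine hε (((p : ZMod ℓ) - q) * w⁻¹) ?_
      field_simp
      linear_combination hw'
  exact ⟨p, by rw [show q = p from Units.ext hpq]⟩

lemma two_ne_zero' (hodd : Odd ℓ) : (2 : ZMod ℓ) ≠ 0 := by
  intro h
  have h2 : ((2 : ℕ) : ZMod ℓ) = 0 := by exact_mod_cast h
  rw [ZMod.natCast_eq_zero_iff] at h2
  have := (Nat.prime_dvd_prime_iff_eq (Fact.out : Nat.Prime ℓ) Nat.prime_two).mp h2
  rw [this] at hodd
  exact (Nat.not_odd_iff_even.mpr (by norm_num)) hodd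

lemma antidiag_val {ε : ZMod ℓ} (hodd : Odd ℓ) {a g : GL2 ℓ}
    (hcns : ∃ x y : ZMod ℓ, mat (a * g * a⁻¹) = !![x, ε * y; y, x])
    (h00 : mat g 0 0 = 0) (h11 : mat g 1 1 = 0) :
    ∃ (b c : (ZMod ℓ)ˣ) (v : ZMod ℓ), v ≠ 0 ∧ g = adia b c ∧ (b : ZMod ℓ) * c = ε * v ^ 2 := by
  obtain ⟨b, c, rfl⟩ := units_of_antidiag h00 h11
  obtain ⟨w, hw⟩ := conj_cns hcns
  rw [mat_adia, Matrix.trace_fin_two, Matrix.det_fin_two] at hw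
  have hw' : ((0 : ZMod ℓ) + 0) ^ 2 - 4 * ((0 : ZMod ℓ) * 0 - (b : ZMod ℓ) * c) = ε * w ^ 2 := hw
  have h2 : (2 : ZMod ℓ) ≠ 0 := two_ne_zero' hodd
  have hw0 : w ≠ 0 := by
    rintro rfl
    have h4 : (4 : ZMod ℓ) * ((b : ZMod ℓ) * c) = 0 := by linear_combination hw'
    have hbc : IsUnit ((b : ZMod ℓ) * c) := (b * c).isUnit
    have h40 : (4 : ZMod ℓ) = 0 := by
      have := hbc.unit_spec
      calc (4 : ZMod ℓ) = 4 * ((b : ZMod ℓ) * c) * ((b * c)⁻¹ : (ZMod ℓ)ˣ) := by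
            rw [show ((b : ZMod ℓ) * c) = ((b * c : (ZMod ℓ)ˣ) : ZMod ℓ) by rw [Units.val_mul],
              mul_assoc, Units.mul_inv, mul_one]
        _ = 0 := by rw [h4, zero_mul]
    have : (2 : ZMod ℓ) * 2 = 0 := by linear_combination h40
    rcases mul_eq_zero.mp this with h | h <;> exact h2 h
  refine ⟨b, c, w * 2⁻¹, ?_, rfl, ?_⟩
  · exact mul_ne_zero hw0 (inv_ne_zero h2)
  · field_simp
    linear_combination hw'

lemma smul_one_fin_two (x : ZMod ℓ) :
    x • (1 : Matrix (Fin 2) (Fin 2) (ZMod ℓ)) = !![x, 0; 0, x] := by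
  rw [Matrix.one_fin_two, Matrix.smul_of]
  simp [Matrix.smul_cons, smul_eq_mul]

lemma conj_scalar {a g : GL2 ℓ} {x : ZMod ℓ}
    (h : mat (a * g * a⁻¹) = x • (1 : Matrix (Fin 2) (Fin 2) (ZMod ℓ))) : mat g = x • 1 := by
  have h2 : mat g = mat a⁻¹ * mat (a * g * a⁻¹) * mat a :=
    congrArg Units.val (show g = a⁻¹ * (a * g * a⁻¹) * a by group)
  rw [h2, h, mul_smul_comm, smul_mul_assoc, mul_one, ← mat_mul, inv_mul_cancel, mat_one]

lemma odd_part (L : ℕ) (hL : L ≠ 0) : Odd (L / 2 ^ padicValNat 2 L) := by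
  have h := Nat.not_dvd_ordCompl Nat.prime_two hL
  rw [Nat.factorization_def _ Nat.prime_two] at h
  rw [Nat.odd_iff]
  omega

lemma nt1 {L n : ℕ} (hL0 : 0 < L) (hn0 : 0 < n) (hLn : L ∣ n)
    (hnd : n ∣ L ^ 2 / 2 ^ padicValNat 2 L) :
    ∃ d, 0 < d ∧ d ∣ L ∧ n * d = L ^ 2 ∧ Odd (L / d) := by
  set k := padicValNat 2 L with hk
  have h2k : 2 ^ k ∣ L := pow_padicValNat_dvd
  set m := L / 2 ^ k with hm
  have hLm : L = 2 ^ k * m := (Nat.mul_div_cancel' h2k).symm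
  have hmodd : Odd m := odd_part L hL0.ne'
  have hquot : L ^ 2 / 2 ^ k = L * m := by
    conv_lhs => rw [pow_two, hLm, mul_assoc]
    rw [Nat.mul_div_cancel_left _ (pow_pos two_pos k), hLm]
    ring
  obtain ⟨e, hne⟩ := hLn
  have he0 : e ≠ 0 := by rintro rfl; rw [hne] at hn0; simp at hn0
  have hem : e ∣ m := by
    have h' := hnd
    rw [hquot, hne] at h'
    exact (mul_dvd_mul_iff_left hL0.ne').mp h'
  have heL : e ∣ L := hem.trans ⟨2 ^ k, by rw [hLm, mul_comm]⟩
  refine ⟨L / e, Nat.div_pos (Nat.le_of_dvd hL0 heL) (Nat.pos_of_ne_zero he0),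
    Nat.div_dvd_of_dvd heL, ?_, ?_⟩
  · rw [hne, mul_assoc, Nat.mul_div_cancel' heL, pow_two]
  · rw [Nat.div_div_self heL hL0.ne']
    rcases hem with ⟨t, ht⟩
    rcases Nat.even_or_odd e with he | ho
    · exfalso
      rw [ht] at hmodd
      exact (Nat.not_odd_iff_even.mpr (he.mul_right t)) hmodd
    · exact ho
  
lemma nt2 {L d n : ℕ} (hL0 : 0 < L) (hd : d ∣ L) (hd2 : ¬ d ∣ L / 2) (hnd : n * d = L ^ 2) :
    0 < n ∧ L ∣ n ∧ n ∣ L ^ 2 / 2 ^ padicValNat 2 L := by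
  obtain ⟨c, hc⟩ := hd
  have hd0 : 0 < d := by
    rcases Nat.eq_zero_or_pos d with h | h
    · subst h; simp at hc; omega
    · exact h
  have hcodd : Odd c := by
    rcases Nat.even_or_odd c with he | ho
    · exfalso
      obtain ⟨c', hc'⟩ := he
      apply hd2
      refine ⟨c', ?_⟩
      rw [hc, hc', show d * (c' + c') = 2 * (d * c') by ring, Nat.mul_div_cancel_left _ two_pos]
    · exact ho
  set k := padicValNat 2 L
  have h2k : 2 ^ k ∣ L := pow_padicValNat_dvd
  have hcop : Nat.Coprime (2 ^ k) c := Nat.Coprime.pow_left _ (hcodd.coprime_two_left)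
  have h2kd : 2 ^ k ∣ d := hcop.dvd_of_dvd_mul_right (hc ▸ h2k)
  obtain ⟨d2, hd2'⟩ := h2kd
  have hn0 : 0 < n := by
    rcases Nat.eq_zero_or_pos n with h | h
    · exfalso; subst h; rw [zero_mul] at hnd; exact (pow_pos hL0 2).ne' hnd.symm
    · exact h
  refine ⟨hn0, ?_, ?_⟩
  · have h' : n * d = (c * L) * d := by rw [hnd, pow_two, hc]; ring
    have hn : n = c * L := Nat.eq_of_mul_eq_mul_right hd0 h'
    exact ⟨c, by rw [hn, mul_comm]⟩
  · have h' : L ^ 2 = 2 ^ k * (n * d2) := by rw [← hnd, hd2']; ring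
    rw [h', Nat.mul_div_cancel_left _ (pow_pos two_pos k)]
    exact Dvd.intro d2 rfl

lemma pow_half_eq_neg_one (hodd : Odd ℓ) {u : ZMod ℓ} (hu : u ≠ 0) (hns : ¬IsSquare u) :
    u ^ (ℓ / 2) = -1 := by
  have hℓ : Nat.Prime ℓ := Fact.out
  have hx : (u ^ (ℓ / 2)) ^ 2 = 1 := by
    rw [← pow_mul]
    have h2 : ℓ / 2 * 2 = ℓ - 1 := by
      rcases hodd with ⟨j, hj⟩; omega
    rw [h2, ZMod.pow_card_sub_one_eq_one hu]
  have h1 : (u ^ (ℓ / 2) - 1) * (u ^ (ℓ / 2) + 1) = 0 := by linear_combination hx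
  rcases mul_eq_zero.mp h1 with h | h
  · exfalso
    exact hns ((ZMod.euler_criterion ℓ hu).mpr (by linear_combination h))
  · linear_combination h

lemma exists_sqrt_ratio (hodd : Odd ℓ) {u ε : ZMod ℓ} (hu : u ≠ 0) (hε0 : ε ≠ 0)
    (hun : ¬IsSquare u) (hεn : ¬IsSquare ε) : ∃ t : ZMod ℓ, t ≠ 0 ∧ u = ε * t ^ 2 := by
  have h1 : u ^ (ℓ / 2) = -1 := pow_half_eq_neg_one hodd hu hun
  have h2 : ε ^ (ℓ / 2) = -1 := pow_half_eq_neg_one hodd hε0 hεn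
  have h3 : (u * ε⁻¹) ^ (ℓ / 2) = 1 := by
    rw [mul_pow, inv_pow, h1, h2]
    norm_num
  obtain ⟨t, ht⟩ := (ZMod.euler_criterion ℓ (mul_ne_zero hu (inv_ne_zero hε0))).mpr h3
  have ht0 : t ≠ 0 := by
    rintro rfl
    rw [mul_zero] at ht
    exact (mul_ne_zero hu (inv_ne_zero hε0)) ht
  refine ⟨t, ht0, ?_⟩
  field_simp at ht ⊢
  linear_combination ht

lemma unit_nonsquare_order (hodd : Odd ℓ) {d s : ℕ} (hds : d * s = ℓ - 1) (hsodd : Odd s) :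
    ∃ u : (ZMod ℓ)ˣ, orderOf u = d ∧ ¬ IsSquare ((u : ZMod ℓ)) := by
  have hℓ : Nat.Prime ℓ := Fact.out
  have hℓ3 : 3 ≤ ℓ := by
    have h2 := hℓ.two_le
    rcases hodd with ⟨j, hj⟩
    omega
  obtain ⟨g, hg⟩ := IsCyclic.exists_generator (α := (ZMod ℓ)ˣ)
  have horder : orderOf g = ℓ - 1 := by
    rw [orderOf_eq_card_of_forall_mem_zpowers hg, natCard_units]
  have hs0 : 0 < s := hsodd.pos
  have hsL : s ∣ ℓ - 1 := ⟨d, by rw [← hds, mul_comm]⟩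
  refine ⟨g ^ s, ?_, ?_⟩
  · rw [orderOf_pow, horder, Nat.gcd_eq_right hsL, ← hds, Nat.mul_div_cancel _ hs0]
  · intro hsq
    have hne : ((g : ZMod ℓ) ^ s) ≠ 0 := by
      intro h
      apply (g ^ s).ne_zero
      rw [Units.val_pow_eq_pow_val]
      exact h
    have h1 : ((g : ZMod ℓ) ^ s) ^ (ℓ / 2) = 1 := by
      refine (ZMod.euler_criterion ℓ hne).mp ?_
      rw [← Units.val_pow_eq_pow_val]
      exact hsq
    have h2 : g ^ (s * (ℓ / 2)) = (1 : (ZMod ℓ)ˣ) := by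
      ext
      rw [Units.val_pow_eq_pow_val, pow_mul, Units.val_one]
      exact h1
    have h3 := orderOf_dvd_of_pow_eq_one h2
    rw [horder] at h3
    rcases hodd with ⟨j, hj⟩
    have hj1 : 1 ≤ j := by omega
    have e1 : ℓ - 1 = 2 * j := by omega
    have e2 : ℓ / 2 = j := by omega
    rw [e1, e2] at h3
    have h4 : 2 ∣ s := by
      exact (Nat.mul_dvd_mul_iff_right hj1).mp h3
    rw [Nat.odd_iff] at hsodd
    omega


lemma construct (hodd : Odd ℓ) {ε : ZMod ℓ} (hε : ∀ t : ZMod ℓ, t ^ 2 ≠ ε)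
    {Ns : Subgroup (GL2 ℓ)} (hNs : (Ns : Set (GL2 ℓ)) = NsSet ℓ)
    {d : ℕ} (hdL : d ∣ ℓ - 1) (hsodd : Odd ((ℓ - 1) / d)) :
    ∃ G : Subgroup (GL2 ℓ), G ≤ Ns ∧ ConjSub G (CnsSet ℓ ε) ∧ ¬ ConjSub G (ZSet ℓ) ∧
      Nat.card G = 2 * d := by
  have hds : d * ((ℓ - 1) / d) = ℓ - 1 := Nat.mul_div_cancel' hdL
  obtain ⟨u, huord, huns⟩ := unit_nonsquare_order hodd hds hsodd
  have hε0 : ε ≠ 0 := fun h => hε 0 (by rw [h]; ring)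
  have hεns : ¬ IsSquare ε := fun ⟨r, hr⟩ => hε r (by rw [sq]; exact hr.symm)
  obtain ⟨t, ht0, htu⟩ := exists_sqrt_ratio hodd u.ne_zero hε0 huns hεns
  set U : ZMod ℓ := (u : ZMod ℓ) with hU
  -- the subgroup
  let Gset : Set (GL2 ℓ) := { g | ∃ z : (ZMod ℓ)ˣ, z ∈ Subgroup.zpowers u ∧
    (mat g = !![(z : ZMod ℓ), 0; 0, (z : ZMod ℓ)] ∨
      mat g = !![0, U * (z : ZMod ℓ); (z : ZMod ℓ), 0]) }
  have hone : (1 : GL2 ℓ) ∈ Gset := by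
    refine ⟨1, one_mem _, Or.inl ?_⟩
    rw [mat_one, Matrix.one_fin_two]
    exact fin2_ext (by rw [Units.val_one]) rfl rfl (by rw [Units.val_one])
  have hmul : ∀ a b : GL2 ℓ, a ∈ Gset → b ∈ Gset → a * b ∈ Gset := by
    rintro a b ⟨z, hz, hza | hza⟩ ⟨w, hw, hwb | hwb⟩
    · refine ⟨z * w, mul_mem hz hw, Or.inl ?_⟩
      rw [mat_mul, hza, hwb, Matrix.mul_fin_two]
      exact fin2_ext (by push_cast; ring) (by ring) (by ring) (by push_cast; ring)
    · refine ⟨z * w, mul_mem hz hw, Or.inr ?_⟩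
      rw [mat_mul, hza, hwb, Matrix.mul_fin_two]
      exact fin2_ext (by ring) (by push_cast; ring) (by push_cast; ring) (by ring)
    · refine ⟨z * w, mul_mem hz hw, Or.inr ?_⟩
      rw [mat_mul, hza, hwb, Matrix.mul_fin_two]
      exact fin2_ext (by ring) (by push_cast; ring) (by push_cast; ring) (by ring)
    · refine ⟨u * z * w, mul_mem (mul_mem (Subgroup.mem_zpowers u) hz) hw, Or.inl ?_⟩
      rw [mat_mul, hza, hwb, Matrix.mul_fin_two]
      exact fin2_ext (by push_cast; ring) (by ring) (by ring) (by push_cast; ring)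
  have hinv : ∀ a : GL2 ℓ, a ∈ Gset → a⁻¹ ∈ Gset := by
    rintro a ⟨z, hz, hza | hza⟩
    · refine ⟨z⁻¹, inv_mem hz, Or.inl ?_⟩
      show (↑a⁻¹ : Matrix (Fin 2) (Fin 2) (ZMod ℓ)) = _
      apply Units.inv_eq_of_mul_eq_one_right
      show mat a * _ = 1
      rw [hza, Matrix.mul_fin_two, Matrix.one_fin_two]
      exact fin2_ext (by simp [← Units.val_mul, -ZMod.inv_coe_unit, -Units.val_inv_eq_inv_val])
        (by ring) (by ring)
        (by simp [← Units.val_mul, -ZMod.inv_coe_unit, -Units.val_inv_eq_inv_val])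
    · refine ⟨u⁻¹ * z⁻¹, mul_mem (inv_mem (Subgroup.mem_zpowers u)) (inv_mem hz), Or.inr ?_⟩
      show (↑a⁻¹ : Matrix (Fin 2) (Fin 2) (ZMod ℓ)) = _
      apply Units.inv_eq_of_mul_eq_one_right
      show mat a * _ = 1
      rw [hza, Matrix.mul_fin_two, Matrix.one_fin_two]
      have hc : ((u⁻¹ * z⁻¹ : (ZMod ℓ)ˣ) : ZMod ℓ) = (U)⁻¹ * ((z : ZMod ℓ))⁻¹ := by
        rw [Units.val_mul, Units.val_inv_eq_inv_val, Units.val_inv_eq_inv_val]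
      rw [hc]
      have hU0 : U ≠ 0 := u.ne_zero
      have hz0 : (z : ZMod ℓ) ≠ 0 := z.ne_zero
      exact fin2_ext (by field_simp; ring) (by ring) (by ring) (by field_simp; ring)
  let G : Subgroup (GL2 ℓ) :=
    ⟨⟨⟨Gset, fun {a b} ha hb => hmul a b ha hb⟩, hone⟩, fun {a} ha => hinv a ha⟩
  have hGmem : ∀ g : GL2 ℓ, g ∈ G ↔ g ∈ Gset := fun g => Iff.rfl
  -- conjugator
  set tu : (ZMod ℓ)ˣ := Units.mk0 t ht0 with htu'
  set P : GL2 ℓ := dia tu⁻¹ 1 with hPdef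
  have hP : mat P = !![t⁻¹, 0; 0, 1] := by
    rw [hPdef, mat_dia]
    exact fin2_ext (by rw [Units.val_inv_eq_inv_val]; rfl) rfl rfl (by rw [Units.val_one])
  have hPi : mat P⁻¹ = !![t, 0; 0, 1] := by
    rw [hPdef, mat_dia_inv]
    exact fin2_ext (by rw [inv_inv]; rfl) rfl rfl (by rw [inv_one, Units.val_one])
  refine ⟨G, ?_, ⟨P, ?_⟩, ?_, ?_⟩
  · -- G ≤ Ns
    intro g hg
    rcases (hGmem g).mp hg with ⟨z, hz, h | h⟩
    · rw [mem_Ns_iff hNs]; left; rw [h]; exact ⟨rfl, rfl⟩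
    · rw [mem_Ns_iff hNs]; right; rw [h]; exact ⟨rfl, rfl⟩
  · -- conjugates into Cns
    intro g hg
    rcases (hGmem g).mp hg with ⟨z, hz, h | h⟩
    · refine ⟨(z : ZMod ℓ), 0, ?_⟩
      show mat P * mat g * mat P⁻¹ = _
      rw [hP, hPi, h, Matrix.mul_fin_two, Matrix.mul_fin_two]
      exact fin2_ext (by field_simp; ring) (by ring) (by ring) (by ring)
    · refine ⟨0, (z : ZMod ℓ) * t, ?_⟩
      show mat P * mat g * mat P⁻¹ = _
      rw [hP, hPi, h, htu, Matrix.mul_fin_two, Matrix.mul_fin_two]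
      exact fin2_ext (by ring) (by field_simp; ring) (by ring) (by ring)
  · -- not conjugate into Z
    rintro ⟨a, ha⟩
    have ha0 : adia u 1 ∈ G := by
      rw [hGmem]
      refine ⟨1, one_mem _, Or.inr ?_⟩
      rw [mat_adia]
      exact fin2_ext rfl (by rw [Units.val_one, mul_one]) (by rw [Units.val_one]) rfl
    obtain ⟨x, hx⟩ := ha _ ha0
    have h2 := conj_scalar hx
    rw [smul_one_fin_two] at h2
    have h3 : ((1 : (ZMod ℓ)ˣ) : ZMod ℓ) = 0 := congrArg (fun M => M 1 0) h2
    rw [Units.val_one] at h3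
    exact one_ne_zero h3
  · -- cardinality
    have hamem : ∀ z : (ZMod ℓ)ˣ, z ∈ Subgroup.zpowers u → adia (u * z) z ∈ G := by
      intro z hz
      rw [hGmem]
      refine ⟨z, hz, Or.inr ?_⟩
      rw [mat_adia]
      exact fin2_ext rfl (by rw [Units.val_mul]) rfl rfl
    have hdmem : ∀ z : (ZMod ℓ)ˣ, z ∈ Subgroup.zpowers u → dia z z ∈ G := by
      intro z hz
      rw [hGmem]
      exact ⟨z, hz, Or.inl rfl⟩
    let F : (Subgroup.zpowers u) × Bool → G := fun x =>
      if x.2 then ⟨adia (u * x.1) x.1, hamem x.1 x.1.2⟩ else ⟨dia x.1 x.1, hdmem x.1 x.1.2⟩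
    have hbij : Function.Bijective F := by
      constructor
      · rintro ⟨z, b⟩ ⟨w, b'⟩ h
        have h' := congrArg Subtype.val h
        simp only [F] at h'
        cases b <;> cases b' <;>
          simp only [if_true, if_false, Bool.false_eq_true, ite_true, ite_false] at h'
        · have e00 : ((z : (ZMod ℓ)ˣ) : ZMod ℓ) = ((w : (ZMod ℓ)ˣ) : ZMod ℓ) :=
            congrArg (fun v : GL2 ℓ => mat v 0 0) h'
          have : (z : (ZMod ℓ)ˣ) = w := Units.ext e00
          simp [Prod.ext_iff, Subtype.ext_iff, this]
        · have e10 : (0 : ZMod ℓ) = ((w : (ZMod ℓ)ˣ) : ZMod ℓ) :=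
            congrArg (fun v : GL2 ℓ => mat v 1 0) h'
          exact absurd e10.symm (w : (ZMod ℓ)ˣ).ne_zero
        · have e10 : ((z : (ZMod ℓ)ˣ) : ZMod ℓ) = 0 :=
            congrArg (fun v : GL2 ℓ => mat v 1 0) h'
          exact absurd e10 (z : (ZMod ℓ)ˣ).ne_zero
        · have e10 : ((z : (ZMod ℓ)ˣ) : ZMod ℓ) = ((w : (ZMod ℓ)ˣ) : ZMod ℓ) :=
            congrArg (fun v : GL2 ℓ => mat v 1 0) h'
          have : (z : (ZMod ℓ)ˣ) = w := Units.ext e10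
          simp [Prod.ext_iff, Subtype.ext_iff, this]
      · rintro ⟨g, hg⟩
        rcases (hGmem g).mp hg with ⟨z, hz, h | h⟩
        · refine ⟨(⟨z, hz⟩, false), ?_⟩
          apply Subtype.ext
          show dia z z = g
          exact Units.ext (show mat (dia z z) = mat g by rw [mat_dia, h])
        · refine ⟨(⟨z, hz⟩, true), ?_⟩
          apply Subtype.ext
          show adia (u * z) z = g
          apply Units.ext
          show mat (adia (u * z) z) = mat g
          rw [mat_adia, h]
          exact fin2_ext rfl (by rw [Units.val_mul]) rfl rfl
    rw [← Nat.card_eq_of_bijective F hbij, Nat.card_prod, Nat.card_zpowers, huord,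
      Nat.card_eq_fintype_card, Fintype.card_bool]
    ring

def scHom : (ZMod ℓ)ˣ →* GL2 ℓ where
  toFun z := dia z z
  map_one' := Units.ext (by
    show mat (dia 1 1) = mat 1
    rw [mat_dia, mat_one, Matrix.one_fin_two, Units.val_one])
  map_mul' z w := Units.ext (by
    show mat (dia (z * w) (z * w)) = mat (dia z z * dia w w)
    rw [mat_dia, mat_mul, mat_dia, mat_dia, Matrix.mul_fin_two]
    exact fin2_ext (by push_cast; ring) (by ring) (by ring) (by push_cast; ring))

lemma forward (hodd : Odd ℓ) {ε : ZMod ℓ} (hε : ∀ t : ZMod ℓ, t ^ 2 ≠ ε)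
    {Ns G : Subgroup (GL2 ℓ)} (hNs : (Ns : Set (GL2 ℓ)) = NsSet ℓ) (hle : G ≤ Ns)
    (hconj : ConjSub G (CnsSet ℓ ε)) (hnotZ : ¬ ConjSub G (ZSet ℓ)) :
    ∃ d : ℕ, Nat.card G = 2 * d ∧ d ∣ ℓ - 1 ∧ ¬ d ∣ (ℓ - 1) / 2 := by
  obtain ⟨a, ha⟩ := hconj
  -- a nonscalar element g₀ of G
  have hex : ∃ g₀ ∈ G, g₀ ∉ ZSet ℓ := by
    by_contra hcon
    push_neg at hcon
    exact hnotZ ⟨1, fun g hg => by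
      rw [show (1 : GL2 ℓ) * g * 1⁻¹ = g by group]
      exact hcon g hg⟩
  obtain ⟨g₀, hg₀G, hg₀Z⟩ := hex
  -- g₀ is antidiagonal
  have hg₀anti : mat g₀ 0 0 = 0 ∧ mat g₀ 1 1 = 0 := by
    rcases (mem_Ns_iff hNs g₀).mp (hle hg₀G) with ⟨h01, h10⟩ | h
    · exfalso
      obtain ⟨z, rfl⟩ := diag_scalar hε (ha g₀ hg₀G) h01 h10
      exact hg₀Z ⟨(z : ZMod ℓ), by rw [smul_one_fin_two, mat_dia]⟩
    · exact h
  obtain ⟨b, c, v, hv0, rfl, hbc⟩ := antidiag_val hodd (ha g₀ hg₀G) hg₀anti.1 hg₀anti.2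
  -- the scalar subgroup
  set S : Subgroup (ZMod ℓ)ˣ := G.comap (scHom (ℓ := ℓ)) with hS
  set d := Nat.card S with hd
  refine ⟨d, ?_, ?_, ?_⟩
  · -- |G| = 2d
    have hmemS : ∀ z : S, dia (z : (ZMod ℓ)ˣ) (z : (ZMod ℓ)ˣ) ∈ G := fun z => z.2
    let F : S × Bool → G := fun x =>
      if x.2 then ⟨dia x.1 x.1 * adia b c, mul_mem (hmemS x.1) hg₀G⟩
      else ⟨dia x.1 x.1, hmemS x.1⟩
    have hprod : ∀ w : (ZMod ℓ)ˣ, mat (dia w w * adia b c) =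
        !![0, (w : ZMod ℓ) * b; (w : ZMod ℓ) * c, 0] := by
      intro w
      rw [mat_mul, mat_dia, mat_adia, Matrix.mul_fin_two]
      exact fin2_ext (by ring) (by ring) (by ring) (by ring)
    have hbij : Function.Bijective F := by
      constructor
      · rintro ⟨z, bb⟩ ⟨w, bb'⟩ h
        have h' := congrArg Subtype.val h
        simp only [F] at h'
        cases bb <;> cases bb' <;>
          simp only [if_true, if_false, Bool.false_eq_true, ite_true, ite_false] at h'
        · have e00 : ((z : (ZMod ℓ)ˣ) : ZMod ℓ) = ((w : (ZMod ℓ)ˣ) : ZMod ℓ) :=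
            congrArg (fun v : GL2 ℓ => mat v 0 0) h'
          simp [Prod.ext_iff, Subtype.ext_iff, Units.ext e00]
        · have e := congrArg mat h'
          rw [mat_dia, hprod] at e
          have e10 : (0 : ZMod ℓ) = ((w : (ZMod ℓ)ˣ) : ZMod ℓ) * c :=
            congrArg (fun M : Matrix (Fin 2) (Fin 2) (ZMod ℓ) => M 1 0) e
          exact absurd e10.symm (mul_ne_zero (w : (ZMod ℓ)ˣ).ne_zero c.ne_zero)
        · have e := congrArg mat h'
          rw [mat_dia, hprod] at e
          have e10 : ((z : (ZMod ℓ)ˣ) : ZMod ℓ) * c = (0 : ZMod ℓ) :=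
            congrArg (fun M : Matrix (Fin 2) (Fin 2) (ZMod ℓ) => M 1 0) e
          exact absurd e10 (mul_ne_zero (z : (ZMod ℓ)ˣ).ne_zero c.ne_zero)
        · have e := congrArg mat h'
          rw [hprod, hprod] at e
          have e10 : ((z : (ZMod ℓ)ˣ) : ZMod ℓ) * c = ((w : (ZMod ℓ)ˣ) : ZMod ℓ) * c :=
            congrArg (fun M : Matrix (Fin 2) (Fin 2) (ZMod ℓ) => M 1 0) e
          have := mul_right_cancel₀ c.ne_zero e10
          simp [Prod.ext_iff, Subtype.ext_iff, Units.ext this]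
      · rintro ⟨g, hg⟩
        rcases (mem_Ns_iff hNs g).mp (hle hg) with ⟨h01, h10⟩ | ⟨h00, h11⟩
        · obtain ⟨z, rfl⟩ := diag_scalar hε (ha g hg) h01 h10
          exact ⟨(⟨z, hg⟩, false), rfl⟩
        · -- antidiagonal case : g * (adia b c)⁻¹ is diagonal and in G
          have hgbc : g * (adia b c)⁻¹ ∈ G := mul_mem hg (inv_mem hg₀G)
          obtain ⟨B, C, rfl⟩ := units_of_antidiag h00 h11
          have hd01 : mat (adia B C * (adia b c)⁻¹) 0 1 = 0 := by
            rw [mat_mul, mat_adia, mat_adia_inv, Matrix.mul_fin_two]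
            show (0 : ZMod ℓ) * _ + (B : ZMod ℓ) * 0 = 0
            ring
          have hd10 : mat (adia B C * (adia b c)⁻¹) 1 0 = 0 := by
            rw [mat_mul, mat_adia, mat_adia_inv, Matrix.mul_fin_two]
            show (C : ZMod ℓ) * 0 + (0 : ZMod ℓ) * _ = 0
            ring
          obtain ⟨z, hz⟩ := diag_scalar hε (ha _ hgbc) hd01 hd10
          have hzS : z ∈ S := by
            rw [hS, Subgroup.mem_comap]
            show dia z z ∈ G
            rw [← hz]
            exact hgbc
          refine ⟨(⟨z, hzS⟩, true), ?_⟩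
          apply Subtype.ext
          show dia z z * adia b c = adia B C
          rw [← hz, inv_mul_cancel_right]
    rw [← Nat.card_eq_of_bijective F hbij, Nat.card_prod,
      show Nat.card Bool = 2 by rw [Nat.card_eq_fintype_card, Fintype.card_bool], hd]
    ring
  · -- d divides ℓ - 1
    rw [hd, ← natCard_units (ℓ := ℓ)]
    exact Subgroup.card_subgroup_dvd_card S
  · -- d does not divide (ℓ-1)/2
    intro hdvd
    -- b*c is a nonsquare element of S
    have hbcS : (b * c : (ZMod ℓ)ˣ) ∈ S := by
      rw [hS, Subgroup.mem_comap]
      show dia (b * c) (b * c) ∈ G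
      have : dia (b * c) (b * c) = adia b c * adia b c := by
        apply Units.ext
        show mat (dia (b * c) (b * c)) = mat (adia b c * adia b c)
        rw [mat_dia, mat_mul, mat_adia, Matrix.mul_fin_two]
        exact fin2_ext (by push_cast; ring) (by ring) (by ring) (by push_cast; ring)
      rw [this]
      exact mul_mem hg₀G hg₀G
    have hpow : (b * c : (ZMod ℓ)ˣ) ^ d = 1 := by
      have h1 : (⟨b * c, hbcS⟩ : S) ^ d = 1 := by
        rw [hd]
        exact pow_card_eq_one'
      have := congrArg (Subtype.val) h1
      exact this
    have hns : ¬ IsSquare ((b * c : (ZMod ℓ)ˣ) : ZMod ℓ) := by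
      rintro ⟨r, hr⟩
      rw [Units.val_mul] at hr
      refine hε (r * v⁻¹) ?_
      field_simp
      linear_combination hbc - hr
    apply hns
    obtain ⟨e, he⟩ := hdvd
    have hhalf : (b * c : (ZMod ℓ)ˣ) ^ ((ℓ - 1) / 2) = 1 := by
      rw [he, pow_mul, hpow, one_pow]
    refine (ZMod.euler_criterion ℓ (b * c).ne_zero).mpr ?_
    have hl2 : ℓ / 2 = (ℓ - 1) / 2 := by rcases hodd with ⟨j, hj⟩; omega
    rw [hl2, ← Units.val_pow_eq_pow_val, hhalf, Units.val_one]

end Paper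

theorem statement_10 (ℓ : ℕ) (hℓ : Nat.Prime ℓ) (hodd : Odd ℓ) (ε : ZMod ℓ)
    (hε : ∀ t : ZMod ℓ, t ^ 2 ≠ ε)
    (Ns : Subgroup (GL2 ℓ)) (hNs : (Ns : Set (GL2 ℓ)) = Paper.NsSet ℓ) :
    { n : ℕ | ∃ G : Subgroup (GL2 ℓ), G ≤ Ns ∧ Paper.BelongsCns ε G ∧ G.relIndex Ns = n } =
      { n : ℕ | 0 < n ∧ (ℓ - 1) ∣ n ∧ n ∣ (ℓ - 1) ^ 2 / 2 ^ (padicValNat 2 (ℓ - 1)) } := by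
  haveI : Fact (Nat.Prime ℓ) := ⟨hℓ⟩
  have hL3 : 3 ≤ ℓ := by
    rcases hodd with ⟨j, hj⟩
    have := hℓ.two_le
    omega
  have hL0 : 0 < ℓ - 1 := by omega
  ext n
  simp only [Set.mem_setOf_eq]
  constructor
  · rintro ⟨G, hle, ⟨hconj, hnotZ⟩, rfl⟩
    obtain ⟨d, hcard, hdL, hd2⟩ := Paper.forward hodd hε hNs hle hconj hnotZ
    have hrel := Paper.relindex_mul_card hle
    rw [Paper.card_Ns hNs, hcard] at hrel
    have hd0 : 0 < d := by
      rcases Nat.eq_zero_or_pos d with h | h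
      · exfalso
        rw [h, Nat.zero_dvd] at hdL
        omega
      · exact h
    have hnd : G.relIndex Ns * d = (ℓ - 1) ^ 2 := by
      apply Nat.eq_of_mul_eq_mul_left (show 0 < 2 by norm_num)
      calc 2 * (G.relIndex Ns * d) = G.relIndex Ns * (2 * d) := by ring
        _ = 2 * (ℓ - 1) ^ 2 := hrel
    exact Paper.nt2 hL0 hdL hd2 hnd
  · rintro ⟨hn0, hLn, hnd⟩
    obtain ⟨d, hd0, hdL, hndL, hodd'⟩ := Paper.nt1 hL0 hn0 hLn hnd
    obtain ⟨G, hle, hconj, hnotZ, hcard⟩ := Paper.construct hodd hε hNs hdL hodd'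
    refine ⟨G, hle, ⟨hconj, hnotZ⟩, ?_⟩
    have hrel := Paper.relindex_mul_card hle
    rw [Paper.card_Ns hNs, hcard] at hrel
    have h2 : G.relIndex Ns * (2 * d) = n * (2 * d) := by
      rw [hrel, ← hndL]
      ring
    exact Nat.eq_of_mul_eq_mul_right (by positivity) h2
end

section
/- Let ℓ be an odd prime. The set of indices [N_s(ℓ) : G] over subgroups G of N_s(ℓ) that belong to N_s(ℓ) equals the set of positive integers dividing an element of {(ℓ−1)²/q : q an odd prime dividing ℓ−1} ∪ {(ℓ−1)²/4 if 4 divides ℓ−1, and (ℓ−1)²/2 otherwise}. -/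
set_option maxRecDepth 8000
set_option synthInstance.maxHeartbeats 400000


open Matrix

namespace Aux
open Paper
variable {ℓ : ℕ}

abbrev F (ℓ : ℕ) := ZMod ℓ

def isDiag (g : GL2 ℓ) : Prop := mat g 0 1 = 0 ∧ mat g 1 0 = 0
def isAnti (g : GL2 ℓ) : Prop := mat g 0 0 = 0 ∧ mat g 1 1 = 0

lemma mat_mul (g h : GL2 ℓ) : mat (g * h) = mat g * mat h := rfl
lemma mat_one : mat (1 : GL2 ℓ) = 1 := rfl

lemma mat_entry_mul (g h : GL2 ℓ) (i j : Fin 2) :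
    mat (g * h) i j = mat g i 0 * mat h 0 j + mat g i 1 * mat h 1 j := by
  rw [mat_mul, Matrix.mul_apply, Fin.sum_univ_two]

lemma val_inv_entries (g : GL2 ℓ) (i j : Fin 2) :
    mat g i 0 * mat (g⁻¹) 0 j + mat g i 1 * mat (g⁻¹) 1 j = (1 : Matrix (Fin 2) (Fin 2) (ZMod ℓ)) i j := by
  rw [← mat_entry_mul, mul_inv_cancel]; rfl

lemma inv_val_entries (g : GL2 ℓ) (i j : Fin 2) :
    mat (g⁻¹) i 0 * mat g 0 j + mat (g⁻¹) i 1 * mat g 1 j = (1 : Matrix (Fin 2) (Fin 2) (ZMod ℓ)) i j := by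
  rw [← mat_entry_mul, inv_mul_cancel]; rfl

lemma not_isDiag_isAnti [Fact ℓ.Prime] (g : GL2 ℓ) : ¬ (isDiag g ∧ isAnti g) := by
  rintro ⟨⟨h01, h10⟩, ⟨h00, h11⟩⟩
  have := val_inv_entries g 0 0
  rw [h00, h01] at this
  simp [Matrix.one_apply] at this

lemma isDiag.mul {g h : GL2 ℓ} (hg : isDiag g) (hh : isDiag h) : isDiag (g * h) := by
  constructor <;> rw [mat_entry_mul] <;>
    simp [hg.1, hg.2, hh.1, hh.2]

lemma isDiag.mul_anti {g h : GL2 ℓ} (hg : isDiag g) (hh : isAnti h) : isAnti (g * h) := by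
  constructor <;> rw [mat_entry_mul] <;> simp [hg.1, hg.2, hh.1, hh.2]

lemma isAnti.mul_diag {g h : GL2 ℓ} (hg : isAnti g) (hh : isDiag h) : isAnti (g * h) := by
  constructor <;> rw [mat_entry_mul] <;> simp [hg.1, hg.2, hh.1, hh.2]

lemma isAnti.mul {g h : GL2 ℓ} (hg : isAnti g) (hh : isAnti h) : isDiag (g * h) := by
  constructor <;> rw [mat_entry_mul] <;> simp [hg.1, hg.2, hh.1, hh.2]

lemma isDiag.inv {g : GL2 ℓ} (hg : isDiag g) : isDiag (g⁻¹) := by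
  obtain ⟨h01, h10⟩ := hg
  have e00 : mat (g⁻¹) 0 0 * mat g 0 0 = 1 := by
    have := inv_val_entries g 0 0; rw [h10] at this; simpa [Matrix.one_apply] using this
  have e11 : mat (g⁻¹) 1 1 * mat g 1 1 = 1 := by
    have := inv_val_entries g 1 1; rw [h01] at this; simpa [Matrix.one_apply] using this
  constructor
  · have := val_inv_entries g 0 1
    rw [h01] at this
    simp [Matrix.one_apply] at this
    -- this : mat g 0 0 * mat g⁻¹ 0 1 = 0
    calc mat g⁻¹ 0 1 = (mat g⁻¹ 0 0 * mat g 0 0) * mat g⁻¹ 0 1 := by rw [e00, one_mul]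
    _ = mat g⁻¹ 0 0 * (mat g 0 0 * mat g⁻¹ 0 1) := by ring
    _ = 0 := by rw [this, mul_zero]
  · have := val_inv_entries g 1 0
    rw [h10] at this
    simp [Matrix.one_apply] at this
    calc mat g⁻¹ 1 0 = (mat g⁻¹ 1 1 * mat g 1 1) * mat g⁻¹ 1 0 := by rw [e11, one_mul]
    _ = mat g⁻¹ 1 1 * (mat g 1 1 * mat g⁻¹ 1 0) := by ring
    _ = 0 := by rw [this, mul_zero]

lemma isAnti.inv {g : GL2 ℓ} (hg : isAnti g) : isAnti (g⁻¹) := by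
  obtain ⟨h00, h11⟩ := hg
  have e01 : mat (g⁻¹) 0 1 * mat g 1 0 = 1 := by
    have := inv_val_entries g 0 0; rw [h00] at this; simpa [Matrix.one_apply] using this
  have e10 : mat (g⁻¹) 1 0 * mat g 0 1 = 1 := by
    have := inv_val_entries g 1 1; rw [h11] at this; simpa [Matrix.one_apply] using this
  constructor
  · have := val_inv_entries g 1 1
    rw [h11] at this
    simp [Matrix.one_apply] at this
    calc mat g⁻¹ 0 0 = (mat g⁻¹ 0 1 * mat g 1 0) * mat g⁻¹ 0 0 := by rw [e01, one_mul]
    _ = mat g⁻¹ 0 1 * (mat g 1 0 * mat g⁻¹ 0 0) := by ring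
    _ = 0 := by
        have h := val_inv_entries g 1 0
        rw [h11] at h
        simp [Matrix.one_apply] at h
        rw [h, mul_zero]
  · calc mat g⁻¹ 1 1 = (mat g⁻¹ 1 0 * mat g 0 1) * mat g⁻¹ 1 1 := by rw [e10, one_mul]
    _ = mat g⁻¹ 1 0 * (mat g 0 1 * mat g⁻¹ 1 1) := by ring
    _ = 0 := by
        have h := val_inv_entries g 0 1
        rw [h00] at h
        simp [Matrix.one_apply] at h
        rw [h, mul_zero]


@[simp] lemma lit00 {α : Type*} (a b c d : α) : !![a,b;c,d] 0 0 = a := rfl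
@[simp] lemma lit01 {α : Type*} (a b c d : α) : !![a,b;c,d] 0 1 = b := rfl
@[simp] lemma lit10 {α : Type*} (a b c d : α) : !![a,b;c,d] 1 0 = c := rfl
@[simp] lemma lit11 {α : Type*} (a b c d : α) : !![a,b;c,d] 1 1 = d := rfl

/-- ext helper for 2x2 matrices -/
lemma ext2 {α : Type*} {M N : Matrix (Fin 2) (Fin 2) α}
    (h00 : M 0 0 = N 0 0) (h01 : M 0 1 = N 0 1) (h10 : M 1 0 = N 1 0) (h11 : M 1 1 = N 1 1) :
    M = N := by
  rw [Matrix.eta_fin_two M, Matrix.eta_fin_two N, h00, h01, h10, h11]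

section Units
variable [Fact ℓ.Prime]

/-- diagonal unit -/
def Dm (x y : (ZMod ℓ)ˣ) : GL2 ℓ :=
  ⟨!![(x:ZMod ℓ), 0; 0, (y:ZMod ℓ)], !![((x⁻¹:(ZMod ℓ)ˣ):ZMod ℓ), 0; 0, ((y⁻¹:(ZMod ℓ)ˣ):ZMod ℓ)],
    by rw [Matrix.mul_fin_two, Matrix.one_fin_two]; simp [-ZMod.inv_coe_unit],
    by rw [Matrix.mul_fin_two, Matrix.one_fin_two]; simp [-ZMod.inv_coe_unit]⟩

/-- antidiagonal unit -/
def Am (x y : (ZMod ℓ)ˣ) : GL2 ℓ :=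
  ⟨!![0, (x:ZMod ℓ); (y:ZMod ℓ), 0], !![0, ((y⁻¹:(ZMod ℓ)ˣ):ZMod ℓ); ((x⁻¹:(ZMod ℓ)ˣ):ZMod ℓ), 0],
    by rw [Matrix.mul_fin_two, Matrix.one_fin_two]; simp [-ZMod.inv_coe_unit],
    by rw [Matrix.mul_fin_two, Matrix.one_fin_two]; simp [-ZMod.inv_coe_unit]⟩

@[simp] lemma mat_Dm (x y : (ZMod ℓ)ˣ) : mat (Dm x y) = !![(x:ZMod ℓ), 0; 0, (y:ZMod ℓ)] := rfl
@[simp] lemma mat_Am (x y : (ZMod ℓ)ˣ) : mat (Am x y) = !![0, (x:ZMod ℓ); (y:ZMod ℓ), 0] := rfl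

lemma mat_injective : Function.Injective (mat (ℓ := ℓ)) := fun _ _ h => Units.ext h

lemma isDiag_Dm (x y : (ZMod ℓ)ˣ) : isDiag (Dm x y) :=
  ⟨rfl, rfl⟩
lemma isAnti_Am (x y : (ZMod ℓ)ˣ) : isAnti (Am x y) :=
  ⟨rfl, rfl⟩

lemma Dm_one : Dm (1 : (ZMod ℓ)ˣ) 1 = 1 := by
  apply mat_injective
  rw [mat_Dm, mat_one, Matrix.one_fin_two, Units.val_one]

lemma Dm_mul (x y x' y' : (ZMod ℓ)ˣ) : Dm x y * Dm x' y' = Dm (x*x') (y*y') := by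
  apply mat_injective
  rw [mat_mul, mat_Dm, mat_Dm, mat_Dm, Matrix.mul_fin_two, Units.val_mul, Units.val_mul]
  apply ext2 <;> simp only [lit00, lit01, lit10, lit11] <;> ring

lemma mat_neg_one : mat (-1 : GL2 ℓ) = !![(-1 : ZMod ℓ), 0; 0, -1] := by
  have h : mat (-1 : GL2 ℓ) = -(1 : Matrix (Fin 2) (Fin 2) (ZMod ℓ)) := by
    show ((-1 : GL2 ℓ) : Matrix (Fin 2) (Fin 2) (ZMod ℓ)) = _
    rw [Units.val_neg, Units.val_one]
  rw [h, Matrix.one_fin_two]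
  apply ext2 <;> simp only [Matrix.neg_apply, lit00, lit01, lit10, lit11, neg_zero]

lemma Dm_neg_one : Dm (-1 : (ZMod ℓ)ˣ) (-1) = (-1 : GL2 ℓ) := by
  apply mat_injective
  rw [mat_Dm, mat_neg_one, Units.val_neg, Units.val_one]

/-- the diagonal embedding as a monoid hom -/
def Dhom : ((ZMod ℓ)ˣ × (ZMod ℓ)ˣ) →* GL2 ℓ where
  toFun p := Dm p.1 p.2
  map_one' := Dm_one
  map_mul' p q := (Dm_mul p.1 p.2 q.1 q.2).symm

@[simp] lemma Dhom_apply (p : (ZMod ℓ)ˣ × (ZMod ℓ)ˣ) : Dhom p = Dm p.1 p.2 := rfl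

lemma Dm_inj {x y x' y' : (ZMod ℓ)ˣ} (h : Dm x y = Dm x' y') : x = x' ∧ y = y' := by
  have h' := congrArg mat h
  rw [mat_Dm, mat_Dm] at h'
  have h00 := congrFun (congrFun h' 0) 0
  have h11 := congrFun (congrFun h' 1) 1
  simp only [lit00, lit11] at h00 h11
  exact ⟨Units.ext h00, Units.ext h11⟩

lemma Dhom_injective : Function.Injective (Dhom (ℓ := ℓ)) := by
  intro ⟨x,y⟩ ⟨x',y'⟩ h
  simp only [Dhom_apply] at h
  obtain ⟨h1, h2⟩ := Dm_inj h
  exact Prod.ext h1 h2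

/-- swap relation: anti * diag = swapped diag * anti -/
lemma anti_mul_Dm {a : GL2 ℓ} (ha : isAnti a) (x y : (ZMod ℓ)ˣ) :
    a * Dm x y = Dm y x * a := by
  apply mat_injective
  rw [mat_mul, mat_mul, mat_Dm, mat_Dm, Matrix.eta_fin_two (mat a),
    Matrix.mul_fin_two, Matrix.mul_fin_two, ha.1, ha.2]
  apply ext2 <;> simp only [lit00, lit01, lit10, lit11] <;> ring

lemma anti_conj_Dm {a : GL2 ℓ} (ha : isAnti a) (x y : (ZMod ℓ)ˣ) :
    a * Dm x y * a⁻¹ = Dm y x := by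
  rw [anti_mul_Dm ha, mul_assoc, mul_inv_cancel, mul_one]

/-- diagonal entries of a diagonal GL element are units, and g = Dm of them -/
lemma isDiag_eq_Dm {g : GL2 ℓ} (hg : isDiag g) :
    ∃ x y : (ZMod ℓ)ˣ, g = Dm x y := by
  have e00 : mat g 0 0 * mat (g⁻¹) 0 0 = 1 := by
    have := val_inv_entries g 0 0; rw [hg.1] at this; simpa [Matrix.one_apply] using this
  have e11 : mat g 1 1 * mat (g⁻¹) 1 1 = 1 := by
    have := val_inv_entries g 1 1; rw [hg.2] at this; simpa [Matrix.one_apply] using this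
  refine ⟨Units.mkOfMulEqOne _ _ e00, Units.mkOfMulEqOne _ _ e11, ?_⟩
  apply mat_injective
  rw [mat_Dm, Units.val_mkOfMulEqOne, Units.val_mkOfMulEqOne]
  conv_lhs => rw [Matrix.eta_fin_two (mat g)]
  rw [hg.1, hg.2]

end Units

section Subgroups
variable [Fact ℓ.Prime]

instance (priority := low) : NeZero ℓ := ⟨Nat.Prime.ne_zero Fact.out⟩

instance : Finite (GL2 ℓ) := by
  unfold GL2 Matrix.GeneralLinearGroup
  infer_instance

def CsSub (ℓ : ℕ) [Fact ℓ.Prime] : Subgroup (GL2 ℓ) where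
  carrier := CsSet ℓ
  one_mem' := ⟨Matrix.one_apply_ne (by decide), Matrix.one_apply_ne (by decide)⟩
  mul_mem' := fun hg hh => isDiag.mul hg hh
  inv_mem' := fun hg => isDiag.inv hg

lemma mem_CsSub {g : GL2 ℓ} : g ∈ CsSub ℓ ↔ isDiag g := Iff.rfl

lemma Dm_mem_CsSub (x y : (ZMod ℓ)ˣ) : Dm x y ∈ CsSub ℓ := isDiag_Dm x y

lemma coe_CsSub : (CsSub ℓ : Set (GL2 ℓ)) = Set.range (Dhom (ℓ := ℓ)) := by
  ext g
  constructor
  · intro hg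
    obtain ⟨x, y, rfl⟩ := isDiag_eq_Dm hg
    exact ⟨(x, y), rfl⟩
  · rintro ⟨⟨x, y⟩, rfl⟩
    exact Dm_mem_CsSub x y

lemma card_CsSub : Nat.card (CsSub ℓ) = (ℓ - 1)^2 := by
  have h1 : Nat.card (CsSub ℓ) = Nat.card (Set.range (Dhom (ℓ := ℓ))) := by
    apply Nat.card_congr
    exact Equiv.setCongr coe_CsSub
  rw [h1, Nat.card_range_of_injective Dhom_injective, Nat.card_prod,
    Nat.card_eq_fintype_card, ZMod.card_units, sq]

/-- key counting lemma: a subgroup of N_s containing an antidiagonal element has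
twice the cardinality of its diagonal part -/
lemma card_eq_two_mul {G : Subgroup (GL2 ℓ)} (hG : ∀ g ∈ G, isDiag g ∨ isAnti g)
    {a : GL2 ℓ} (ha : a ∈ G) (haA : isAnti a) :
    Nat.card G = 2 * Nat.card (G ⊓ CsSub ℓ : Subgroup (GL2 ℓ)) := by
  set D : Set (GL2 ℓ) := (G : Set (GL2 ℓ)) ∩ CsSet ℓ with hD
  have hDcoe : ((G ⊓ CsSub ℓ : Subgroup (GL2 ℓ)) : Set (GL2 ℓ)) = D := Subgroup.coe_inf G (CsSub ℓ)
  have hset : (G : Set (GL2 ℓ)) = D ∪ (fun g => a * g) '' D := by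
    ext g
    constructor
    · intro hg
      rcases hG g hg with hd | hanti
      · exact Or.inl ⟨hg, hd⟩
      · refine Or.inr ⟨a⁻¹ * g, ⟨mul_mem (inv_mem ha) hg, isAnti.mul haA.inv hanti⟩, ?_⟩
        simp [mul_assoc, ← mul_assoc a a⁻¹ g]
    · rintro (hg | ⟨h, hh, rfl⟩)
      · exact hg.1
      · exact mul_mem ha hh.1
  have hdisj : Disjoint D ((fun g => a * g) '' D) := by
    rw [Set.disjoint_left]
    rintro x ⟨_, hxd⟩ ⟨h, ⟨_, hhd⟩, rfl⟩
    exact not_isDiag_isAnti (a * h) ⟨hxd, isAnti.mul_diag haA hhd⟩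
  have hcard : Nat.card G = ((G : Set (GL2 ℓ))).ncard := Nat.card_coe_set_eq _
  have hcardD : Nat.card (G ⊓ CsSub ℓ : Subgroup (GL2 ℓ)) = D.ncard := by
    rw [show ((G ⊓ CsSub ℓ : Subgroup (GL2 ℓ)) : Type _) = D from congrArg _ hDcoe]
    exact Nat.card_coe_set_eq _
  rw [hcard, hcardD, hset, Set.ncard_union_eq hdisj (Set.toFinite _) (Set.toFinite _),
    Set.ncard_image_of_injective _ (mul_right_injective a), two_mul]

lemma mem_Ns_iff {Ns : Subgroup (GL2 ℓ)} (hNs : (Ns : Set (GL2 ℓ)) = NsSet ℓ) {g : GL2 ℓ} :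
    g ∈ Ns ↔ isDiag g ∨ isAnti g := by
  rw [← SetLike.mem_coe, hNs]
  exact Iff.rfl

lemma CsSub_le_Ns {Ns : Subgroup (GL2 ℓ)} (hNs : (Ns : Set (GL2 ℓ)) = NsSet ℓ) :
    CsSub ℓ ≤ Ns := fun g hg => (mem_Ns_iff hNs).mpr (Or.inl hg)

lemma card_Ns {Ns : Subgroup (GL2 ℓ)} (hNs : (Ns : Set (GL2 ℓ)) = NsSet ℓ) :
    Nat.card Ns = 2 * (ℓ - 1)^2 := by
  have ha : Am 1 1 ∈ Ns := (mem_Ns_iff hNs).mpr (Or.inr (isAnti_Am 1 1))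
  rw [card_eq_two_mul (fun g hg => (mem_Ns_iff hNs).mp hg) ha (isAnti_Am 1 1),
    inf_eq_right.mpr (CsSub_le_Ns hNs), card_CsSub]

lemma relindex_mul_card {G K : Subgroup (GL2 ℓ)} (h : G ≤ K) :
    G.relIndex K * Nat.card G = Nat.card K := by
  have h1 := Subgroup.index_mul_card (G.subgroupOf K)
  rwa [Nat.card_congr (Subgroup.subgroupOfEquivOfLe h).toEquiv] at h1

end Subgroups

section Master
variable [Fact ℓ.Prime]

def swapStable (S : Subgroup ((ZMod ℓ)ˣ × (ZMod ℓ)ˣ)) : Prop := ∀ p ∈ S, (p.2, p.1) ∈ S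

lemma mem_map_diag {S : Subgroup ((ZMod ℓ)ˣ × (ZMod ℓ)ˣ)} {g : GL2 ℓ}
    (hg : g ∈ S.map Dhom) : isDiag g := by
  obtain ⟨⟨x, y⟩, _, rfl⟩ := hg
  exact isDiag_Dm x y

lemma conj_mem_map {S : Subgroup ((ZMod ℓ)ˣ × (ZMod ℓ)ˣ)} (hS : swapStable S)
    {w : GL2 ℓ} (hw : isAnti w) {g : GL2 ℓ} (hg : g ∈ S.map Dhom) :
    w * g * w⁻¹ ∈ S.map Dhom := by
  obtain ⟨⟨x, y⟩, hp, rfl⟩ := hg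
  exact ⟨(y, x), hS _ hp, (anti_conj_Dm hw x y).symm⟩

lemma diag_commute {g h : GL2 ℓ} (hg : isDiag g) (hh : isDiag h) : g * h = h * g := by
  obtain ⟨x, y, rfl⟩ := isDiag_eq_Dm hg
  obtain ⟨x', y', rfl⟩ := isDiag_eq_Dm hh
  rw [Dm_mul, Dm_mul, mul_comm x, mul_comm y]

/-- the master construction: from a swap-stable subgroup `S` of the diagonal torus and an
antidiagonal element `w` with `w² ∈ S`, build the subgroup generated by them. -/
lemma master (S : Subgroup ((ZMod ℓ)ˣ × (ZMod ℓ)ˣ)) (hS : swapStable S)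
    (w : GL2 ℓ) (hw : isAnti w) (hw2 : w * w ∈ S.map Dhom) :
    ∃ G : Subgroup (GL2 ℓ),
      (∀ g ∈ G, isDiag g ∨ isAnti g) ∧ S.map Dhom ≤ G ∧ w ∈ G ∧
      Nat.card G = 2 * Nat.card S := by
  classical
  set K := S.map Dhom with hK
  have cw : ∀ g ∈ K, w * g * w⁻¹ ∈ K := fun g hg => conj_mem_map hS hw hg
  have cw' : ∀ g ∈ K, w⁻¹ * g * w ∈ K := by
    intro g hg
    have := conj_mem_map hS hw.inv hg
    rwa [inv_inv] at this
  refine ⟨{ carrier := ↑K ∪ (fun g => w * g) '' ↑K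
            one_mem' := Or.inl K.one_mem
            mul_mem' := ?_
            inv_mem' := ?_ }, ?_, ?_, ?_, ?_⟩
  · rintro x y (hx | ⟨h, hh, rfl⟩) (hy | ⟨k, hk, rfl⟩)
    · exact Or.inl (mul_mem hx hy)
    · refine Or.inr ⟨(w⁻¹ * x * w) * k, mul_mem (cw' x hx) hk, ?_⟩
      group
    · exact Or.inr ⟨h * y, mul_mem hh hy, by rw [mul_assoc]⟩
    · refine Or.inl ?_
      have : (w * h) * (w * k) = ((w * h * w⁻¹) * (w * w)) * k := by group
      rw [this]
      exact mul_mem (mul_mem (cw h hh) hw2) hk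
  · rintro x (hx | ⟨h, hh, rfl⟩)
    · exact Or.inl (inv_mem hx)
    · refine Or.inr ⟨(w⁻¹ * h⁻¹ * w) * (w * w)⁻¹, mul_mem (cw' h⁻¹ (inv_mem hh)) (inv_mem hw2), ?_⟩
      group
  · rintro g (hg | ⟨k, hk, rfl⟩)
    · exact Or.inl (mem_map_diag hg)
    · exact Or.inr (isAnti.mul_diag hw (mem_map_diag hk))
  · intro g hg
    exact Or.inl hg
  · exact Or.inr ⟨1, K.one_mem, mul_one w⟩
  · refine (fun (G : Subgroup (GL2 ℓ))
        (hGc : (G : Set (GL2 ℓ)) = ↑K ∪ (fun g => w * g) '' ↑K) =>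
        (?_ : Nat.card G = 2 * Nat.card S)) _ rfl
    have hmem : ∀ g ∈ G, isDiag g ∨ isAnti g := by
      intro g hg
      rw [← SetLike.mem_coe, hGc] at hg
      rcases hg with hg | ⟨k, hk, rfl⟩
      · exact Or.inl (mem_map_diag hg)
      · exact Or.inr (isAnti.mul_diag hw (mem_map_diag hk))
    have hwG : w ∈ G := by
      rw [← SetLike.mem_coe, hGc]
      exact Or.inr ⟨1, K.one_mem, mul_one w⟩
    have h2 : Nat.card G = 2 * Nat.card (G ⊓ CsSub ℓ : Subgroup (GL2 ℓ)) :=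
      card_eq_two_mul hmem hwG hw
    have hinf : G ⊓ CsSub ℓ = K := by
      ext g
      rw [Subgroup.mem_inf, ← SetLike.mem_coe (x := g) (p := G), hGc]
      constructor
      · rintro ⟨(hg | ⟨k, hk, rfl⟩), hdg⟩
        · exact hg
        · exact absurd ⟨hdg, isAnti.mul_diag hw (mem_map_diag hk)⟩ (not_isDiag_isAnti _)
      · intro hg
        exact ⟨Or.inl hg, mem_map_diag hg⟩
    have h3 : Nat.card K = Nat.card S :=
      Nat.card_congr (S.equivMapOfInjective Dhom Dhom_injective).toEquiv.symm
    rw [hinf, h3] at h2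
    exact h2

/-- the non-conjugacy criterion via noncommutativity -/
lemma not_conjsub_of_noncomm {G : Subgroup (GL2 ℓ)} {s t : GL2 ℓ}
    (hs : s ∈ G) (ht : t ∈ G) (h : s * t ≠ t * s) :
    ¬ (∃ a : GL2 ℓ, ∀ g ∈ G, a * g * a⁻¹ ∈ CsSet ℓ) := by
  rintro ⟨a, ha⟩
  have h1 : isDiag (a * s * a⁻¹) := ha s hs
  have h2 : isDiag (a * t * a⁻¹) := ha t ht
  have h3 := diag_commute h1 h2
  apply h
  have h4 : a * (s * t) * a⁻¹ = a * (t * s) * a⁻¹ := by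
    have e1 : (a * s * a⁻¹) * (a * t * a⁻¹) = a * (s * t) * a⁻¹ := by group
    have e2 : (a * t * a⁻¹) * (a * s * a⁻¹) = a * (t * s) * a⁻¹ := by group
    rw [← e1, ← e2, h3]
  have h5 := mul_right_cancel h4
  exact mul_left_cancel h5

/-- noncommutation of an antidiagonal with a non-scalar diagonal -/
lemma anti_diag_noncomm {w : GL2 ℓ} (hw : isAnti w) {x y : (ZMod ℓ)ˣ} (hxy : x ≠ y) :
    w * Dm x y ≠ Dm x y * w := by
  intro h
  rw [anti_mul_Dm hw] at h
  have := mul_right_cancel h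
  exact hxy (Dm_inj this).1.symm

end Master

section Wrappers
variable [Fact ℓ.Prime]

lemma lhs_mem_of_master (Ns : Subgroup (GL2 ℓ)) (hNs : (Ns : Set (GL2 ℓ)) = NsSet ℓ)
    (S : Subgroup ((ZMod ℓ)ˣ × (ZMod ℓ)ˣ)) (hS : swapStable S)
    (w : GL2 ℓ) (hw : isAnti w) (hw2 : w * w ∈ S.map Dhom)
    (n : ℕ) (hn : n * Nat.card S = (ℓ - 1)^2)
    (hnc : ∀ G : Subgroup (GL2 ℓ), S.map Dhom ≤ G → w ∈ G →
      ¬ (∃ a : GL2 ℓ, ∀ g ∈ G, a * g * a⁻¹ ∈ CsSet ℓ)) :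
    ∃ G : Subgroup (GL2 ℓ), G ≤ Ns ∧ Paper.BelongsNs G ∧ G.relIndex Ns = n := by
  obtain ⟨G, hmem, hKG, hwG, hcard⟩ := master S hS w hw hw2
  have hGNs : G ≤ Ns := fun g hg => (mem_Ns_iff hNs).mpr (hmem g hg)
  refine ⟨G, hGNs, ⟨⟨1, fun g hg => ?_⟩, hnc G hKG hwG⟩, ?_⟩
  · rw [one_mul, inv_one, mul_one, ← hNs]
    exact hGNs hg
  · have h1 := relindex_mul_card hGNs
    rw [hcard, card_Ns hNs] at h1
    have h2 : G.relIndex Ns * (2 * Nat.card S) = n * (2 * Nat.card S) := by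
      rw [h1, ← hn]
      ring
    have hpos : 0 < 2 * Nat.card S := by
      have : 0 < Nat.card S := Nat.card_pos
      omega
    exact Nat.eq_of_mul_eq_mul_right hpos h2

lemma sq_Am_one_one : Am (1 : (ZMod ℓ)ˣ) 1 * Am 1 1 = 1 := by
  apply mat_injective
  rw [mat_mul, mat_Am, mat_one, Matrix.mul_fin_two, Matrix.one_fin_two]
  apply ext2 <;> simp only [lit00, lit01, lit10, lit11, Units.val_one, mul_zero, zero_mul,
    add_zero, zero_add, mul_one, one_mul]

lemma lhs_mem_nonabelian (Ns : Subgroup (GL2 ℓ)) (hNs : (Ns : Set (GL2 ℓ)) = NsSet ℓ)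
    (S : Subgroup ((ZMod ℓ)ˣ × (ZMod ℓ)ˣ)) (hS : swapStable S)
    (p : (ZMod ℓ)ˣ × (ZMod ℓ)ˣ) (hp : p ∈ S) (hpneq : p.1 ≠ p.2)
    (n : ℕ) (hn : n * Nat.card S = (ℓ - 1)^2) :
    ∃ G : Subgroup (GL2 ℓ), G ≤ Ns ∧ Paper.BelongsNs G ∧ G.relIndex Ns = n := by
  apply lhs_mem_of_master Ns hNs S hS (Am 1 1) (isAnti_Am 1 1) _ n hn
  · intro G hKG hwG
    have htG : Dm p.1 p.2 ∈ G := hKG ⟨p, hp, rfl⟩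
    exact not_conjsub_of_noncomm hwG htG (anti_diag_noncomm (isAnti_Am 1 1) hpneq)
  · rw [sq_Am_one_one]
    exact Subgroup.one_mem _

lemma neg_one_ne_one_units (hodd : ℓ % 2 = 1) : (-1 : (ZMod ℓ)ˣ) ≠ 1 := by
  intro h
  have h1 : (-1 : ZMod ℓ) = 1 := by
    have := congrArg (Units.val) h
    rwa [Units.val_neg, Units.val_one] at this
  have h2 : ((2 : ℕ) : ZMod ℓ) = 0 := by
    push_cast
    linear_combination -h1
  rw [ZMod.natCast_eq_zero_iff] at h2
  have := Nat.le_of_dvd (by norm_num) h2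
  have hp := (Fact.out : ℓ.Prime).two_le
  omega

lemma sq_Am_one_negone : Am (1 : (ZMod ℓ)ˣ) (-1) * Am 1 (-1) = Dm (-1) (-1) := by
  apply mat_injective
  rw [mat_mul, mat_Am, mat_Dm, Matrix.mul_fin_two]
  apply ext2 <;> simp only [lit00, lit01, lit10, lit11, Units.val_one, Units.val_neg, mul_zero,
    zero_mul, add_zero, zero_add, mul_one, one_mul]

lemma lhs_mem_c3 (Ns : Subgroup (GL2 ℓ)) (hNs : (Ns : Set (GL2 ℓ)) = NsSet ℓ)
    (hodd : ℓ % 2 = 1) (h4 : ¬ 4 ∣ (ℓ - 1))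
    (n : ℕ) (hn : n * 2 = (ℓ - 1)^2) :
    ∃ G : Subgroup (GL2 ℓ), G ≤ Ns ∧ Paper.BelongsNs G ∧ G.relIndex Ns = n := by
  set S := Subgroup.zpowers ((-1, -1) : (ZMod ℓ)ˣ × (ZMod ℓ)ˣ) with hSdef
  have hcardS : Nat.card S = 2 := by
    rw [hSdef, Nat.card_zpowers]
    apply orderOf_eq_prime
    · ext <;> simp
    · intro h
      exact neg_one_ne_one_units hodd (congrArg Prod.fst h)
  have hS : swapStable S := by
    rintro p ⟨k, rfl⟩
    exact ⟨k, by ext <;> simp⟩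
  have hw2 : Am (1 : (ZMod ℓ)ˣ) (-1) * Am 1 (-1) ∈ S.map Dhom :=
    ⟨(-1, -1), Subgroup.mem_zpowers _, sq_Am_one_negone.symm⟩
  apply lhs_mem_of_master Ns hNs S hS (Am 1 (-1)) (isAnti_Am 1 (-1)) hw2 n (by rw [hcardS]; exact hn)
  intro G hKG hwG
  rintro ⟨Q, hQ⟩
  have hN : isDiag (Q * Am (1 : (ZMod ℓ)ˣ) (-1) * Q⁻¹) := hQ _ hwG
  set N := Q * Am (1 : (ZMod ℓ)ˣ) (-1) * Q⁻¹ with hNdef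
  have hsq : N * N = -1 := by
    have e1 : N * N = Q * (Am (1 : (ZMod ℓ)ˣ) (-1) * Am 1 (-1)) * Q⁻¹ := by
      rw [hNdef]; group
    rw [e1, sq_Am_one_negone, Dm_neg_one, mul_neg_one, neg_mul, mul_inv_cancel]
  have hval : mat N 0 0 * mat N 0 0 = -1 := by
    have e2 := mat_entry_mul N N 0 0
    rw [hsq, hN.1, mat_neg_one, lit00, zero_mul, add_zero] at e2
    linear_combination -e2
  have hsquare : IsSquare (-1 : ZMod ℓ) := ⟨mat N 0 0, hval.symm⟩
  have h3 := ZMod.exists_sq_eq_neg_one_iff.mp hsquare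
  have hp := (Fact.out : ℓ.Prime).two_le
  omega

end Wrappers

section Cyclic
variable [Fact ℓ.Prime]

lemma card_units_eq : Nat.card (ZMod ℓ)ˣ = ℓ - 1 := by
  rw [Nat.card_eq_fintype_card, ZMod.card_units]

lemma exists_orderOf_eq {u : ℕ} (hu : u ∣ ℓ - 1) : ∃ g : (ZMod ℓ)ˣ, orderOf g = u := by
  obtain ⟨g0, hg0⟩ := IsCyclic.exists_generator (α := (ZMod ℓ)ˣ)
  have hord : orderOf g0 = ℓ - 1 := by
    rw [orderOf_eq_card_of_forall_mem_zpowers hg0]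
    exact card_units_eq
  refine ⟨g0 ^ ((ℓ - 1) / u), ?_⟩
  rw [orderOf_pow, hord, Nat.gcd_eq_right (Nat.div_dvd_of_dvd hu), Nat.div_div_self hu]
  have : 0 < ℓ - 1 := by
    have := (Fact.out : ℓ.Prime).two_le
    omega
  omega

lemma orderOf_pow_div {g : (ZMod ℓ)ˣ} {u v : ℕ} (hg : orderOf g = u) (hv : v ∣ u) (hu : 0 < u) :
    orderOf (g ^ (u / v)) = v := by
  rw [orderOf_pow, hg, Nat.gcd_eq_right (Nat.div_dvd_of_dvd hv), Nat.div_div_self hv]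
  omega

/-- the subgroup {(x,y) : x ∈ ⟨a⟩, x⁻¹y ∈ ⟨b⟩} -/
def S1 (a b : (ZMod ℓ)ˣ) : Subgroup ((ZMod ℓ)ˣ × (ZMod ℓ)ˣ) where
  carrier := {p | p.1 ∈ Subgroup.zpowers a ∧ p.1⁻¹ * p.2 ∈ Subgroup.zpowers b}
  one_mem' := ⟨one_mem _, by simpa using one_mem (Subgroup.zpowers b)⟩
  mul_mem' := by
    rintro p q ⟨hp1, hp2⟩ ⟨hq1, hq2⟩
    refine ⟨mul_mem hp1 hq1, ?_⟩
    have h := mul_mem hp2 hq2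
    rwa [show (p.1⁻¹ * p.2) * (q.1⁻¹ * q.2) = (p * q).1⁻¹ * (p * q).2 by
      simp only [Prod.fst_mul, Prod.snd_mul, mul_inv]
      exact mul_mul_mul_comm _ _ _ _] at h
  inv_mem' := by
    rintro p ⟨hp1, hp2⟩
    refine ⟨inv_mem hp1, ?_⟩
    have := inv_mem hp2
    rwa [show (p.1⁻¹ * p.2)⁻¹ = (p⁻¹).1⁻¹ * (p⁻¹).2 by
      simp only [Prod.fst_inv, Prod.snd_inv, mul_inv, inv_inv]] at this

lemma card_S1 (a b : (ZMod ℓ)ˣ) :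
    Nat.card (S1 a b) = orderOf a * orderOf b := by
  have e : (S1 a b) ≃ (Subgroup.zpowers a × Subgroup.zpowers b) :=
    { toFun := fun p => (⟨p.1.1, p.2.1⟩, ⟨p.1.1⁻¹ * p.1.2, p.2.2⟩)
      invFun := fun q => ⟨(q.1.1, q.1.1 * q.2.1), ⟨q.1.2, by
        rw [inv_mul_cancel_left]; exact q.2.2⟩⟩
      left_inv := fun p => by
        apply Subtype.ext
        apply Prod.ext
        · rfl
        · exact mul_inv_cancel_left _ _
      right_inv := fun q => by
        apply Prod.ext
        · apply Subtype.ext; rfl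
        · apply Subtype.ext
          exact inv_mul_cancel_left _ _ }
  rw [Nat.card_congr e, Nat.card_prod, Nat.card_zpowers, Nat.card_zpowers]

lemma swapStable_S1 {a b : (ZMod ℓ)ˣ} (hba : b ∈ Subgroup.zpowers a) : swapStable (S1 a b) := by
  rintro ⟨x, y⟩ ⟨hx, hxy⟩
  have hb : Subgroup.zpowers b ≤ Subgroup.zpowers a := Subgroup.zpowers_le.mpr hba
  refine ⟨?_, ?_⟩
  · have h := mul_mem hx (hb hxy)
    simpa [mul_inv_cancel_left] using h
  · have h := inv_mem hxy
    simpa [mul_inv, inv_inv] using h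

def S2 (a : (ZMod ℓ)ˣ) : Subgroup ((ZMod ℓ)ˣ × (ZMod ℓ)ˣ) where
  carrier := {p | p.1 ∈ Subgroup.zpowers a ∧ p.2 = p.1⁻¹}
  one_mem' := ⟨one_mem _, inv_one.symm⟩
  mul_mem' := by
    rintro p q ⟨hp1, hp2⟩ ⟨hq1, hq2⟩
    exact ⟨mul_mem hp1 hq1, by rw [Prod.snd_mul, Prod.fst_mul, hp2, hq2, mul_inv]⟩
  inv_mem' := by
    rintro p ⟨hp1, hp2⟩
    exact ⟨inv_mem hp1, by rw [Prod.snd_inv, Prod.fst_inv, hp2]⟩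

lemma card_S2 (a : (ZMod ℓ)ˣ) : Nat.card (S2 a) = orderOf a := by
  have e : (S2 a) ≃ (Subgroup.zpowers a) :=
    { toFun := fun p => ⟨p.1.1, p.2.1⟩
      invFun := fun q => ⟨(q.1, q.1⁻¹), ⟨q.2, rfl⟩⟩
      left_inv := fun p => by
        apply Subtype.ext
        apply Prod.ext
        · rfl
        · exact p.2.2.symm
      right_inv := fun q => by apply Subtype.ext; rfl }
  rw [Nat.card_congr e, Nat.card_zpowers]

lemma swapStable_S2 {a : (ZMod ℓ)ˣ} : swapStable (S2 a) := by
  rintro ⟨x, y⟩ ⟨hx, hy⟩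
  refine ⟨hy ▸ inv_mem hx, ?_⟩
  show x = y⁻¹
  rw [show y = x⁻¹ from hy, inv_inv]

/-- easy direction assembly -/
lemma rhs_construct (Ns : Subgroup (GL2 ℓ)) (hNs : (Ns : Set (GL2 ℓ)) = NsSet ℓ)
    (hodd : ℓ % 2 = 1) (n d : ℕ) (hnd : n * d = (ℓ - 1)^2)
    (hd2 : 2 ≤ d) (hd4 : 4 ∣ (ℓ - 1) → d ≠ 2) :
    ∃ G : Subgroup (GL2 ℓ), G ≤ Ns ∧ Paper.BelongsNs G ∧ G.relIndex Ns = n := by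
  have hdvd : d ∣ (ℓ - 1)^2 := Dvd.intro_left n hnd
  set u := Nat.gcd d (ℓ - 1) with hu
  have hu_d : u ∣ d := Nat.gcd_dvd_left _ _
  have hu_e : u ∣ (ℓ - 1) := Nat.gcd_dvd_right _ _
  have hu_pos : 0 < u := Nat.gcd_pos_of_pos_left _ (by omega)
  set v := d / u with hv
  have huv : u * v = d := Nat.mul_div_cancel' hu_d
  have hdu2 : d ∣ u * u := by
    have h2 : d ∣ u * (ℓ - 1) := by
      rw [show u * (ℓ - 1) = Nat.gcd (d * (ℓ - 1)) ((ℓ - 1) * (ℓ - 1)) by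
        rw [Nat.gcd_mul_right]]
      exact Nat.dvd_gcd ⟨ℓ - 1, rfl⟩ (by rw [← sq]; exact hdvd)
    rw [show u * u = Nat.gcd (u * d) (u * (ℓ - 1)) by rw [Nat.gcd_mul_left]]
    exact Nat.dvd_gcd ⟨u, mul_comm u d⟩ h2
  have hvu : v ∣ u := by
    have h := huv ▸ hdu2
    exact (mul_dvd_mul_iff_left (by omega : u ≠ 0)).mp h
  clear_value u v
  by_cases hv2 : 2 ≤ v
  · obtain ⟨a, ha⟩ := exists_orderOf_eq hu_e
    set b := a ^ (u / v) with hbdef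
    have hb : orderOf b = v := orderOf_pow_div ha hvu hu_pos
    have hba : b ∈ Subgroup.zpowers a := by
      rw [hbdef]
      exact pow_mem (Subgroup.mem_zpowers a) _
    apply lhs_mem_nonabelian Ns hNs (S1 a b) (swapStable_S1 hba) (1, b)
      ⟨one_mem _, by simpa using Subgroup.mem_zpowers b⟩
      (by
        intro h
        have h1 : b = 1 := h.symm
        rw [h1, orderOf_one] at hb
        omega)
      n (by rw [card_S1, ha, hb, huv]; exact hnd)
  · have hvne : v ≠ 0 := by
      intro h
      rw [h, mul_zero] at huv
      omega
    have hv1 : v = 1 := by omega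
    have hud : u = d := by rw [← huv, hv1, mul_one]
    have hd_e : d ∣ ℓ - 1 := hud ▸ hu_e
    by_cases hd3 : 3 ≤ d
    · obtain ⟨a, ha⟩ := exists_orderOf_eq hd_e
      apply lhs_mem_nonabelian Ns hNs (S2 a) swapStable_S2 (a, a⁻¹)
        ⟨Subgroup.mem_zpowers a, rfl⟩
        (by
          intro h
          have h' : a = a⁻¹ := h
          have h2 : a ^ 2 = 1 := by
            rw [sq]
            nth_rewrite 1 [h']
            exact inv_mul_cancel a
          have h3 := orderOf_dvd_of_pow_eq_one h2
          rw [ha] at h3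
          have := Nat.le_of_dvd (by norm_num) h3
          omega)
        n (by rw [card_S2, ha]; exact hnd)
    · have hd2' : d = 2 := by omega
      have h4 : ¬ 4 ∣ (ℓ - 1) := fun h => (hd4 h) hd2'
      exact lhs_mem_c3 Ns hNs hodd h4 n (by subst hd2'; exact hnd)

end Cyclic

section Hard
variable [Fact ℓ.Prime]

lemma anti_entry_ne_zero {a : GL2 ℓ} (ha : isAnti a) : mat a 0 1 ≠ 0 := by
  intro hb
  have h := val_inv_entries a 0 0
  rw [ha.1, hb, zero_mul, zero_mul, add_zero] at h
  simp only [Matrix.one_apply_eq] at h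
  exact one_ne_zero h.symm

lemma exists_conj_diag {a : GL2 ℓ} (ha : isAnti a) {s : ZMod ℓ}
    (hs : mat a 0 1 * mat a 1 0 = s * s) (hsne : s ≠ 0) (h2 : (2 : ZMod ℓ) ≠ 0) :
    ∃ Q : GL2 ℓ, isDiag (Q * a * Q⁻¹) := by
  set b := mat a 0 1 with hb
  set c := mat a 1 0 with hc
  have hbne : b ≠ 0 := anti_entry_ne_zero ha
  have hβ : -(2 * b * s) ≠ 0 := by
    intro h
    rcases mul_eq_zero.mp (neg_eq_zero.mp h) with h' | h'
    · rcases mul_eq_zero.mp h' with h'' | h''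
      · exact h2 h''
      · exact hbne h''
    · exact hsne h'
  set α : ZMod ℓ := (-(2 * b * s))⁻¹ with hα
  have hαβ : α * -(2 * b * s) = 1 := inv_mul_cancel₀ hβ
  clear_value α
  set Minv : Matrix (Fin 2) (Fin 2) (ZMod ℓ) := !![α * (-s), α * (-b); α * (-s), α * b] with hM
  set P : Matrix (Fin 2) (Fin 2) (ZMod ℓ) := !![b, b; s, -s] with hP
  have hMP : Minv * P = 1 := by
    rw [hM, hP, Matrix.mul_fin_two, Matrix.one_fin_two]
    apply ext2 <;> simp only [lit00, lit01, lit10, lit11] <;>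
      first
        | linear_combination hαβ
        | linear_combination -hαβ
        | ring
  have hPM : P * Minv = 1 := by
    rw [hM, hP, Matrix.mul_fin_two, Matrix.one_fin_two]
    apply ext2 <;> simp only [lit00, lit01, lit10, lit11] <;>
      first
        | linear_combination hαβ
        | linear_combination -hαβ
        | ring
  refine ⟨⟨Minv, P, hMP, hPM⟩, ?_, ?_⟩
  · show (Minv * mat a * P) 0 1 = 0
    conv_lhs => rw [Matrix.eta_fin_two (mat a), ha.1, ha.2, ← hb, ← hc, hM, hP,
      Matrix.mul_fin_two, Matrix.mul_fin_two]
    rw [lit01]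
    linear_combination (-(α * b)) * hs
  · show (Minv * mat a * P) 1 0 = 0
    conv_lhs => rw [Matrix.eta_fin_two (mat a), ha.1, ha.2, ← hb, ← hc, hM, hP,
      Matrix.mul_fin_two, Matrix.mul_fin_two]
    rw [lit10]
    linear_combination (α * b) * hs

lemma isDiag_one : isDiag (1 : GL2 ℓ) :=
  ⟨Matrix.one_apply_ne (by decide), Matrix.one_apply_ne (by decide)⟩

lemma isDiag_neg {g : GL2 ℓ} (hg : isDiag g) : isDiag (-g) := by
  have h : mat (-g) = -(mat g) := Units.val_neg g
  exact ⟨by rw [h, Matrix.neg_apply, hg.1, neg_zero], by rw [h, Matrix.neg_apply, hg.2, neg_zero]⟩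

lemma two_ne_zero' (hodd : ℓ % 2 = 1) : (2 : ZMod ℓ) ≠ 0 := by
  intro h
  have h2 : ((2 : ℕ) : ZMod ℓ) = 0 := by push_cast; exact h
  rw [ZMod.natCast_eq_zero_iff] at h2
  have := Nat.le_of_dvd (by norm_num) h2
  have hp := (Fact.out : ℓ.Prime).two_le
  omega

lemma conj_cs_of_small {G : Subgroup (GL2 ℓ)} (hGmem : ∀ g ∈ G, isDiag g ∨ isAnti g)
    {a : GL2 ℓ} (haG : a ∈ G) (haA : isAnti a) (hodd : ℓ % 2 = 1)
    (hK : ∀ g ∈ G, isDiag g → g = 1 ∨ g = -1)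
    (hsq : ∃ s : ZMod ℓ, mat a 0 1 * mat a 1 0 = s * s ∧ s ≠ 0) :
    ∃ Q : GL2 ℓ, ∀ g ∈ G, Q * g * Q⁻¹ ∈ CsSet ℓ := by
  obtain ⟨s, hs, hsne⟩ := hsq
  obtain ⟨Q, hQ⟩ := exists_conj_diag haA hs hsne (two_ne_zero' hodd)
  refine ⟨Q, fun g hg => ?_⟩
  rcases hGmem g hg with hd | hA
  · rcases hK g hg hd with rfl | rfl
    · show isDiag (Q * 1 * Q⁻¹)
      rw [mul_one, mul_inv_cancel]
      exact isDiag_one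
    · show isDiag (Q * (-1) * Q⁻¹)
      rw [mul_neg_one, neg_mul, mul_inv_cancel]
      exact isDiag_neg isDiag_one
  · have hk : a⁻¹ * g ∈ G := mul_mem (inv_mem haG) hg
    have hkd : isDiag (a⁻¹ * g) := isAnti.mul haA.inv hA
    rcases hK _ hk hkd with h1 | h1
    · have hga : g = a := (inv_mul_eq_one.mp h1).symm
      rw [hga]
      exact hQ
    · have hga : g = -a := by
        have h2 := congrArg (fun z => a * z) h1
        simp only [mul_inv_cancel_left, mul_neg_one] at h2
        exact h2
      rw [hga]
      show isDiag (Q * (-a) * Q⁻¹)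
      rw [mul_neg, neg_mul]
      exact isDiag_neg hQ

lemma lhs_to_rhs (Ns : Subgroup (GL2 ℓ)) (hNs : (Ns : Set (GL2 ℓ)) = NsSet ℓ)
    (hodd : ℓ % 2 = 1) {G : Subgroup (GL2 ℓ)} (hG : G ≤ Ns) (hB : Paper.BelongsNs G) :
    0 < G.relIndex Ns ∧
      ∃ m : ℕ,
        ((∃ q : ℕ, q.Prime ∧ Odd q ∧ q ∣ (ℓ - 1) ∧ m = (ℓ - 1) ^ 2 / q) ∨
          m = (ℓ - 1) ^ 2 / (if 4 ∣ ℓ - 1 then 4 else 2)) ∧ G.relIndex Ns ∣ m := by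
  obtain ⟨hconjNs, hnotconj⟩ := hB
  have hGmem : ∀ g ∈ G, isDiag g ∨ isAnti g := fun g hg => (mem_Ns_iff hNs).mp (hG hg)
  -- there is an antidiagonal element
  have hexA : ∃ a ∈ G, isAnti a := by
    by_contra hall
    push_neg at hall
    refine hnotconj ⟨1, fun g hg => ?_⟩
    rw [one_mul, inv_one, mul_one]
    rcases hGmem g hg with hd | hA
    · exact hd
    · exact absurd hA (hall g hg)
  obtain ⟨a, haG, haA⟩ := hexA
  set K : Subgroup (GL2 ℓ) := G ⊓ CsSub ℓ with hKdef
  have hmemK : ∀ g : GL2 ℓ, g ∈ K ↔ g ∈ G ∧ isDiag g := fun g => Subgroup.mem_inf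
  set d := Nat.card K with hd
  set n := G.relIndex Ns with hn
  have hcardG : Nat.card G = 2 * d := card_eq_two_mul hGmem haG haA
  have h1 : n * (2 * d) = 2 * (ℓ - 1)^2 := by
    rw [← hcardG, ← card_Ns hNs]
    exact relindex_mul_card hG
  have hnd : n * d = (ℓ - 1)^2 := by
    have h2 : 2 * (n * d) = 2 * (ℓ - 1)^2 := by rw [← h1]; ring
    omega
  have hdpos : 0 < d := by
    haveI : Nonempty (↥K) := ⟨⟨1, K.one_mem⟩⟩
    exact Nat.card_pos
  have hl3 : 3 ≤ ℓ := by
    have := (Fact.out : ℓ.Prime).two_le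
    omega
  have hepos : 0 < (ℓ - 1)^2 := by
    have h0 : 0 < ℓ - 1 := by omega
    positivity
  have hnpos : 0 < n := by
    rcases Nat.eq_zero_or_pos n with h | h
    · rw [h, zero_mul] at hnd
      omega
    · exact h
  refine ⟨hnpos, ?_⟩
  by_cases hq : ∃ q : ℕ, q.Prime ∧ Odd q ∧ q ∣ d
  · obtain ⟨q, hqp, hqo, hqd⟩ := hq
    have hqe : q ∣ (ℓ - 1) := by
      have h3 : q ∣ (ℓ - 1) * (ℓ - 1) := by
        rw [← sq]
        exact hqd.trans (Dvd.intro_left n hnd)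
      rcases (Nat.Prime.dvd_mul hqp).mp h3 with h | h <;> exact h
    obtain ⟨d', hd'⟩ := hqd
    refine ⟨(ℓ - 1)^2 / q, Or.inl ⟨q, hqp, hqo, hqe, rfl⟩, ?_⟩
    have h4 : (ℓ - 1)^2 = (n * d') * q := by rw [← hnd, hd']; ring
    rw [h4, Nat.mul_div_cancel _ hqp.pos]
    exact ⟨d', rfl⟩
  · by_cases h4d : 4 ∣ d
    · obtain ⟨d', hd'⟩ := h4d
      by_cases he4 : 4 ∣ ℓ - 1
      · refine ⟨(ℓ - 1)^2 / 4, Or.inr (by rw [if_pos he4]), ?_⟩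
        have h4 : (ℓ - 1)^2 = (n * d') * 4 := by rw [← hnd, hd']; ring
        rw [h4, Nat.mul_div_cancel _ (by norm_num)]
        exact ⟨d', rfl⟩
      · refine ⟨(ℓ - 1)^2 / 2, Or.inr (by rw [if_neg he4]), ?_⟩
        have h4 : (ℓ - 1)^2 = (n * (2 * d')) * 2 := by rw [← hnd, hd']; ring
        rw [h4, Nat.mul_div_cancel _ (by norm_num)]
        exact ⟨2 * d', rfl⟩
    · -- d has no odd prime factor and is not divisible by 4, so d = 1 or d = 2
      have hd12 : d = 1 ∨ d = 2 := by
        have hc1 : (d / 2 ^ d.factorization 2) = 1 := by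
          by_contra hc
          have hcd : (d / 2 ^ d.factorization 2) ∣ d := Nat.ordCompl_dvd d 2
          have hmf : ((d / 2 ^ d.factorization 2)).minFac.Prime := Nat.minFac_prime hc
          have hmfd : ((d / 2 ^ d.factorization 2)).minFac ∣ d := (Nat.minFac_dvd _).trans hcd
          have hne2 : ((d / 2 ^ d.factorization 2)).minFac ≠ 2 := by
            intro h2
            have hdd := Nat.minFac_dvd ((d / 2 ^ d.factorization 2))
            rw [h2] at hdd
            exact Nat.not_dvd_ordCompl Nat.prime_two (by omega) hdd
          exact hq ⟨_, hmf, hmf.odd_of_ne_two hne2, hmfd⟩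
        have hproj : 2 ^ d.factorization 2 = d := by
          have hh := Nat.ordProj_mul_ordCompl_eq_self d 2
          rw [hc1, mul_one] at hh
          exact hh
        have hf2 : d.factorization 2 ≤ 1 := by
          by_contra hf
          push_neg at hf
          have hdvd4 : (4 : ℕ) ∣ 2 ^ d.factorization 2 := by
            have hp : (2:ℕ)^2 ∣ 2 ^ d.factorization 2 := pow_dvd_pow 2 hf
            simpa using hp
          rw [hproj] at hdvd4
          exact h4d hdvd4
        rcases Nat.le_one_iff_eq_zero_or_eq_one.mp hf2 with h | h
        · rw [h, pow_zero] at hproj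
          exact Or.inl hproj.symm
        · rw [h, pow_one] at hproj
          exact Or.inr hproj.symm
      rcases hd12 with hd1 | hd2
      · -- d = 1 : contradiction, G is conjugate into the split Cartan
        exfalso
        have hKbot : K = ⊥ := Subgroup.card_eq_one.mp (by rw [← hd]; exact hd1)
        have hK1 : ∀ g ∈ G, isDiag g → g = 1 := by
          intro g hg hdg
          have hgK : g ∈ K := (hmemK g).mpr ⟨hg, hdg⟩
          rwa [hKbot, Subgroup.mem_bot] at hgK
        have haa : a * a = 1 := hK1 _ (mul_mem haG haG) (isAnti.mul haA haA)
        have hbc : mat a 0 1 * mat a 1 0 = 1 * 1 := by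
          have h5 := mat_entry_mul a a 0 0
          rw [haa, haA.1, zero_mul, zero_add, mat_one, Matrix.one_apply_eq] at h5
          rw [one_mul]
          exact h5.symm
        exact hnotconj (conj_cs_of_small hGmem haG haA hodd
          (fun g hg hdg => Or.inl (hK1 g hg hdg)) ⟨1, hbc, one_ne_zero⟩)
      · by_cases he4 : 4 ∣ ℓ - 1
        · -- d = 2 and 4 ∣ ℓ - 1 : contradiction
          exfalso
          have hcard2 : Nat.card K = 2 := by rw [← hd]; exact hd2
          obtain ⟨z, hz1, hz2⟩ := (Nat.card_eq_two_iff' (1 : K)).mp hcard2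
          set t : GL2 ℓ := (z : GL2 ℓ) with htdef
          have htK : t ∈ K := z.2
          have htne : t ≠ 1 := fun h => hz1 (Subtype.ext h)
          have hclass : ∀ g ∈ K, g = 1 ∨ g = t := by
            intro g hgK
            by_cases hg1 : g = 1
            · exact Or.inl hg1
            · right
              have hzz : (⟨g, hgK⟩ : K) = z := hz2 _ (fun h => hg1 (congrArg Subtype.val h))
              exact congrArg Subtype.val hzz
          have htG : t ∈ G := ((hmemK t).mp htK).1
          have htD : isDiag t := ((hmemK t).mp htK).2
          obtain ⟨x, y, hxy⟩ := isDiag_eq_Dm htD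
          have htt : t * t = 1 := by
            rcases hclass (t * t) (mul_mem htK htK) with h | h
            · exact h
            · exfalso
              apply htne
              have : t * t = t * 1 := by rw [h, mul_one]
              exact mul_left_cancel this
          have hconj : a * t * a⁻¹ = Dm y x := by rw [hxy, anti_conj_Dm haA]
          have hswap : a * t * a⁻¹ ∈ K := (hmemK _).mpr
            ⟨mul_mem (mul_mem haG htG) (inv_mem haG), by rw [hconj]; exact isDiag_Dm y x⟩
          have hyx : y = x := by
            rcases hclass _ hswap with h | h
            · rw [hconj, ← Dm_one] at h
              obtain ⟨h1, h2⟩ := Dm_inj h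
              exact absurd (by rw [hxy, h1, h2, Dm_one] : t = 1) htne
            · rw [hconj, hxy] at h
              exact (Dm_inj h).1
          have hxx : x * x = 1 := by
            have h6 : Dm (x * x) (y * y) = Dm 1 1 := by
              rw [← Dm_mul, ← hxy, htt, Dm_one]
            exact (Dm_inj h6).1
          have hxne1 : x ≠ 1 := fun h => htne (by rw [hxy, hyx, h, Dm_one])
          have hxv : (x : ZMod ℓ) = -1 := by
            have hvv : (x : ZMod ℓ) * x = 1 := by rw [← Units.val_mul, hxx, Units.val_one]
            have h5 : ((x : ZMod ℓ) - 1) * ((x : ZMod ℓ) + 1) = 0 := by linear_combination hvv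
            rcases mul_eq_zero.mp h5 with h | h
            · exact absurd (Units.ext (by rw [Units.val_one]; linear_combination h)) hxne1
            · linear_combination h
          have htneg : t = -1 := by
            have hxm : x = -1 := Units.ext (by rw [hxv, Units.val_neg, Units.val_one])
            rw [hxy, hyx, hxm, Dm_neg_one]
          have hK1 : ∀ g ∈ G, isDiag g → g = 1 ∨ g = -1 := by
            intro g hg hdg
            rcases hclass g ((hmemK g).mpr ⟨hg, hdg⟩) with h | h
            · exact Or.inl h
            · exact Or.inr (h.trans htneg)
          have haaK : a * a ∈ K := (hmemK _).mpr ⟨mul_mem haG haG, isAnti.mul haA haA⟩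
          have hbc0 := mat_entry_mul a a 0 0
          rw [haA.1, zero_mul, zero_add] at hbc0
          have hsq : ∃ s : ZMod ℓ, mat a 0 1 * mat a 1 0 = s * s ∧ s ≠ 0 := by
            rcases hclass _ haaK with h | h
            · refine ⟨1, ?_, one_ne_zero⟩
              rw [← hbc0, h, mat_one, Matrix.one_apply_eq, one_mul]
            · have h' : a * a = -1 := h.trans htneg
              have hm34 : ℓ % 4 ≠ 3 := by omega
              obtain ⟨s, hs⟩ := ZMod.exists_sq_eq_neg_one_iff.mpr hm34
              refine ⟨s, ?_, ?_⟩
              · rw [← hbc0, h', mat_neg_one, lit00, hs]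
              · intro h0
                rw [h0, mul_zero] at hs
                exact one_ne_zero (neg_eq_zero.mp hs)
          exact hnotconj (conj_cs_of_small hGmem haG haA hodd hK1 hsq)
        · -- d = 2 and ¬ 4 ∣ ℓ - 1 : index divides (ℓ-1)²/2
          refine ⟨(ℓ - 1)^2 / 2, Or.inr (by rw [if_neg he4]), ?_⟩
          have h4 : (ℓ - 1)^2 = n * 2 := by rw [← hnd, hd2]
          rw [h4, Nat.mul_div_cancel _ (by norm_num)]

end Hard
end Aux


theorem statement_11 (ℓ : ℕ) (hℓ : Nat.Prime ℓ) (hodd : Odd ℓ)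
    (Ns : Subgroup (GL2 ℓ)) (hNs : (Ns : Set (GL2 ℓ)) = Paper.NsSet ℓ) :
    { n : ℕ | ∃ G : Subgroup (GL2 ℓ), G ≤ Ns ∧ Paper.BelongsNs G ∧ G.relIndex Ns = n } =
      { n : ℕ | 0 < n ∧
        ∃ m : ℕ,
          ((∃ q : ℕ, q.Prime ∧ Odd q ∧ q ∣ (ℓ - 1) ∧ m = (ℓ - 1) ^ 2 / q) ∨
            m = (ℓ - 1) ^ 2 / (if 4 ∣ ℓ - 1 then 4 else 2)) ∧ n ∣ m } := by
  haveI : Fact ℓ.Prime := ⟨hℓ⟩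
  have hodd' : ℓ % 2 = 1 := Nat.odd_iff.mp hodd
  have hl3 : 3 ≤ ℓ := by
    have := hℓ.two_le
    rcases Nat.eq_or_lt_of_le this with h | h
    · exfalso; rw [← h] at hodd'; omega
    · omega
  ext n
  simp only [Set.mem_setOf_eq]
  constructor
  · rintro ⟨G, hG, hB, rfl⟩
    exact Aux.lhs_to_rhs Ns hNs hodd' hG hB
  · rintro ⟨hnpos, m, hm, j, rfl⟩
    rcases hm with ⟨q, hqp, hqo, hqe, hmq⟩ | hmk
    · obtain ⟨k, hk⟩ := hqe
      have hq3 : 3 ≤ q := by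
        have h2 := hqp.two_le
        rcases hqo with ⟨r, hr⟩
        omega
      have he2 : (ℓ - 1)^2 = q * (k * (ℓ - 1)) := by
        rw [sq]
        nth_rewrite 1 [hk]
        ring
      have hm' : n * j = k * (ℓ - 1) := by
        rw [hmq, he2, Nat.mul_div_cancel_left _ (by omega : 0 < q)]
      have hkpos : 0 < k := by
        rcases Nat.eq_zero_or_pos k with h | h
        · rw [h, mul_zero] at hk; omega
        · exact h
      have hjpos : 0 < j := by
        rcases Nat.eq_zero_or_pos j with h | h
        · rw [h, mul_zero] at hm'
          have hpos2 : 0 < k * (ℓ - 1) := Nat.mul_pos hkpos (by omega)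
          omega
        · exact h
      have hjq : 3 ≤ j * q := by
        have := Nat.mul_le_mul hjpos hq3
        omega
      refine Aux.rhs_construct Ns hNs hodd' n (j * q) ?_ (by omega) (fun _ => by omega)
      calc n * (j * q) = (n * j) * q := by ring
      _ = (k * (ℓ - 1)) * q := by rw [hm']
      _ = (ℓ - 1)^2 := by rw [he2]; ring
    · by_cases he4 : 4 ∣ ℓ - 1
      · rw [if_pos he4] at hmk
        obtain ⟨k, hk⟩ := he4
        have he2 : (ℓ - 1)^2 = 4 * (k * (ℓ - 1)) := by
          rw [sq]
          nth_rewrite 1 [hk]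
          ring
        have hm' : n * j = k * (ℓ - 1) := by
          rw [hmk, he2, Nat.mul_div_cancel_left _ (by omega : 0 < (4:ℕ))]
        have hkpos : 0 < k := by
          rcases Nat.eq_zero_or_pos k with h | h
          · rw [h, mul_zero] at hk; omega
          · exact h
        have hjpos : 0 < j := by
          rcases Nat.eq_zero_or_pos j with h | h
          · rw [h, mul_zero] at hm'
            have hpos2 : 0 < k * (ℓ - 1) := Nat.mul_pos hkpos (by omega)
            omega
          · exact h
        refine Aux.rhs_construct Ns hNs hodd' n (j * 4) ?_ (by omega) (fun _ => by omega)
        calc n * (j * 4) = (n * j) * 4 := by ring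
        _ = (k * (ℓ - 1)) * 4 := by rw [hm']
        _ = (ℓ - 1)^2 := by rw [he2]; ring
      · rw [if_neg he4] at hmk
        have h2e : 2 ∣ ℓ - 1 := by omega
        obtain ⟨k, hk⟩ := h2e
        have he2 : (ℓ - 1)^2 = 2 * (k * (ℓ - 1)) := by
          rw [sq]
          nth_rewrite 1 [hk]
          ring
        have hm' : n * j = k * (ℓ - 1) := by
          rw [hmk, he2, Nat.mul_div_cancel_left _ (by omega : 0 < (2:ℕ))]
        have hkpos : 0 < k := by
          rcases Nat.eq_zero_or_pos k with h | h
          · rw [h, mul_zero] at hk; omega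
          · exact h
        have hjpos : 0 < j := by
          rcases Nat.eq_zero_or_pos j with h | h
          · rw [h, mul_zero] at hm'
            have hpos2 : 0 < k * (ℓ - 1) := Nat.mul_pos hkpos (by omega)
            omega
          · exact h
        refine Aux.rhs_construct Ns hNs hodd' n (j * 2) ?_ (by omega) (fun h => (he4 h).elim)
        calc n * (j * 2) = (n * j) * 2 := by ring
        _ = (k * (ℓ - 1)) * 2 := by rw [hm']
        _ = (ℓ - 1)^2 := by rw [he2]; ring
end

section
/- Let ℓ be an odd prime. The set of indices [N_s(ℓ) : G] over subgroups G of N_s(ℓ) that belong to the normalizer N_ns(ℓ) of the nonsplit Cartan equals the set of positive integers divisible by (ℓ−1)/2 and dividing (ℓ−1)². -/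
open Matrix

namespace S12
open Paper

/-- generic index-2 extension of a subgroup -/
theorem ext_subgroup {Γ : Type*} [Group Γ] (A : Subgroup Γ) (t : Γ)
    (ht2 : t * t ∈ A) (htc : ∀ a ∈ A, t * a * t⁻¹ ∈ A) (htn : t ∉ A) :
    ∃ K : Subgroup Γ, (∀ x, x ∈ K ↔ x ∈ A ∨ ∃ a ∈ A, x = a * t) ∧
      Nat.card K = 2 * Nat.card A ∧ A ≤ K ∧ t ∈ K := by
  classical
  set S : Set Γ := {x | x ∈ A ∨ ∃ a ∈ A, x = a * t} with hS
  have hmul : ∀ x ∈ S, ∀ y ∈ S, x * y ∈ S := by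
    rintro x (hx | ⟨a, ha, rfl⟩) y (hy | ⟨b, hb, rfl⟩)
    · exact Or.inl (A.mul_mem hx hy)
    · exact Or.inr ⟨x * b, A.mul_mem hx hb, by group⟩
    · exact Or.inr ⟨a * (t * y * t⁻¹), A.mul_mem ha (htc y hy), by group⟩
    · refine Or.inl ?_
      have : a * t * (b * t) = a * (t * b * t⁻¹) * (t * t) := by group
      rw [this]
      exact A.mul_mem (A.mul_mem ha (htc b hb)) ht2
  have hinv : ∀ x ∈ S, x⁻¹ ∈ S := by
    rintro x (hx | ⟨a, ha, rfl⟩)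
    · exact Or.inl (A.inv_mem hx)
    · exact Or.inr ⟨t * ((t * t)⁻¹ * a⁻¹) * t⁻¹,
        htc _ (A.mul_mem (A.inv_mem ht2) (A.inv_mem ha)), by group⟩
  refine ⟨{ carrier := S
            one_mem' := Or.inl A.one_mem
            mul_mem' := fun hx hy => hmul _ hx _ hy
            inv_mem' := fun hx => hinv _ hx }, fun x => Iff.rfl, ?_, fun x hx => Or.inl hx,
          Or.inr ⟨1, A.one_mem, (one_mul t).symm⟩⟩
  have hdisj : ∀ a ∈ A, ∀ b ∈ A, (a : Γ) ≠ b * t := by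
    rintro a ha b hb rfl
    exact htn (by simpa using A.mul_mem (A.inv_mem hb) ha)
  let f : (A × Bool) → {x : Γ // x ∈ S} := fun p => match p with
    | (a, false) => ⟨a, Or.inl a.2⟩
    | (a, true) => ⟨(a : Γ) * t, Or.inr ⟨a, a.2, rfl⟩⟩
  have hbij : Function.Bijective f := by
    constructor
    · rintro ⟨a, b⟩ ⟨a', b'⟩ h
      cases b <;> cases b' <;>
        simp only [f, Subtype.mk.injEq] at h
      · exact Prod.ext (Subtype.coe_inj.mp h) rfl
      · exact absurd h (hdisj _ a.2 _ a'.2)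
      · exact absurd h.symm (hdisj _ a'.2 _ a.2)
      · exact Prod.ext (Subtype.coe_inj.mp (mul_right_cancel h)) rfl
    · rintro ⟨x, hx | ⟨a, ha, rfl⟩⟩
      · exact ⟨(⟨x, hx⟩, false), rfl⟩
      · exact ⟨(⟨a, ha⟩, true), rfl⟩
  have hc : Nat.card {x : Γ // x ∈ S} = Nat.card (A × Bool) :=
    (Nat.card_eq_of_bijective f hbij).symm
  show Nat.card {x : Γ // x ∈ S} = 2 * Nat.card A
  rw [hc, Nat.card_prod, Nat.card_eq_fintype_card (α := Bool)]
  simp [Fintype.card_bool, Nat.mul_comm]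

variable {ℓ : ℕ}

def mk2 (A B : Matrix (Fin 2) (Fin 2) (ZMod ℓ)) (h1 : A * B = 1) (h2 : B * A = 1) : GL2 ℓ :=
  ⟨A, B, h1, h2⟩

@[simp] lemma mk2_val (A B : Matrix (Fin 2) (Fin 2) (ZMod ℓ)) (h1 h2) :
    mat (mk2 A B h1 h2) = A := rfl

lemma mat_mul (x y : GL2 ℓ) : mat (x * y) = mat x * mat y := rfl

lemma mat_inv (x : GL2 ℓ) : mat x⁻¹ = (mat x)⁻¹ := Matrix.coe_units_inv x

@[simp] lemma ent00 (a b c d : ZMod ℓ) : !![a, b; c, d] 0 0 = a := by simp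
@[simp] lemma ent01 (a b c d : ZMod ℓ) : !![a, b; c, d] 0 1 = b := by simp
@[simp] lemma ent10 (a b c d : ZMod ℓ) : !![a, b; c, d] 1 0 = c := by simp
@[simp] lemma ent11 (a b c d : ZMod ℓ) : !![a, b; c, d] 1 1 = d := by simp

lemma isUnit_det (g : GL2 ℓ) : IsUnit ((mat g).det) :=
  (Matrix.isUnit_iff_isUnit_det _).mp ⟨g, rfl⟩

lemma det_eq (g : GL2 ℓ) :
    (mat g).det = mat g 0 0 * mat g 1 1 - mat g 0 1 * mat g 1 0 :=
  Matrix.det_fin_two _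

lemma trace_conj (a g : GL2 ℓ) :
    Matrix.trace (mat (a * g * a⁻¹)) = Matrix.trace (mat g) := by
  have h : mat (a * g * a⁻¹)
      = (a : Matrix (Fin 2) (Fin 2) (ZMod ℓ)) * mat g * ((a⁻¹ : GL2 ℓ) : Matrix (Fin 2) (Fin 2) (ZMod ℓ)) := rfl
  rw [h, Matrix.trace_units_conj]

lemma det_conj (a g : GL2 ℓ) :
    (mat (a * g * a⁻¹)).det = (mat g).det := by
  have h : mat (a * g * a⁻¹)
      = (a : Matrix (Fin 2) (Fin 2) (ZMod ℓ)) * mat g * ((a⁻¹ : GL2 ℓ) : Matrix (Fin 2) (Fin 2) (ZMod ℓ)) := rfl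
  rw [h, Matrix.det_units_conj]

section prime
variable [Fact ℓ.Prime]

def diagGL (a b : (ZMod ℓ)ˣ) : GL2 ℓ :=
  mk2 !![(a : ZMod ℓ), 0; 0, (b : ZMod ℓ)]
    !![((a⁻¹ : (ZMod ℓ)ˣ) : ZMod ℓ), 0; 0, ((b⁻¹ : (ZMod ℓ)ˣ) : ZMod ℓ)]
    (by rw [Matrix.mul_fin_two, Matrix.one_fin_two]
        simp only [mul_zero, zero_mul, add_zero, zero_add, Units.mul_inv])
    (by rw [Matrix.mul_fin_two, Matrix.one_fin_two]
        simp only [mul_zero, zero_mul, add_zero, zero_add, Units.inv_mul])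

def antiGL (a b : (ZMod ℓ)ˣ) : GL2 ℓ :=
  mk2 !![0, (a : ZMod ℓ); (b : ZMod ℓ), 0]
    !![0, ((b⁻¹ : (ZMod ℓ)ˣ) : ZMod ℓ); ((a⁻¹ : (ZMod ℓ)ˣ) : ZMod ℓ), 0]
    (by rw [Matrix.mul_fin_two, Matrix.one_fin_two]
        simp only [mul_zero, zero_mul, add_zero, zero_add, Units.mul_inv])
    (by rw [Matrix.mul_fin_two, Matrix.one_fin_two]
        simp only [mul_zero, zero_mul, add_zero, zero_add, Units.inv_mul])

lemma mat_diagGL (a b : (ZMod ℓ)ˣ) :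
    mat (diagGL a b) = !![(a : ZMod ℓ), 0; 0, (b : ZMod ℓ)] := rfl

lemma mat_antiGL (a b : (ZMod ℓ)ˣ) :
    mat (antiGL a b) = !![0, (a : ZMod ℓ); (b : ZMod ℓ), 0] := rfl

lemma card_units' : Nat.card (ZMod ℓ)ˣ = ℓ - 1 := by
  rw [Nat.card_eq_fintype_card, ZMod.card_units]

lemma mem_iff_of_coe {Ns : Subgroup (GL2 ℓ)} {T : Set (GL2 ℓ)}
    (hNs : (Ns : Set (GL2 ℓ)) = T) (x : GL2 ℓ) : x ∈ Ns ↔ x ∈ T := by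
  rw [← SetLike.mem_coe, hNs]

lemma card_Ns (Ns : Subgroup (GL2 ℓ)) (hNs : (Ns : Set (GL2 ℓ)) = Paper.NsSet ℓ) :
    Nat.card Ns = 2 * ((ℓ - 1) * (ℓ - 1)) := by
  classical
  haveI : NeZero ℓ := ⟨(Fact.out : ℓ.Prime).ne_zero⟩
  have hmem := mem_iff_of_coe hNs
  let U := (ZMod ℓ)ˣ × (ZMod ℓ)ˣ
  let f : U ⊕ U → Ns := fun p => match p with
    | .inl (a, b) => ⟨diagGL a b, by
        rw [hmem]; left
        exact ⟨by rw [mat_diagGL, ent01], by rw [mat_diagGL, ent10]⟩⟩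
    | .inr (a, b) => ⟨antiGL a b, by
        rw [hmem]; right
        exact ⟨by rw [mat_antiGL, ent00], by rw [mat_antiGL, ent11]⟩⟩
  have hinj : Function.Injective f := by
    rintro (⟨a, b⟩ | ⟨a, b⟩) (⟨a', b'⟩ | ⟨a', b'⟩) h <;>
      simp only [f] at h <;>
      rw [Subtype.mk.injEq] at h
    · have h0 := congrArg (fun z => Paper.mat z 0 0) h
      have h1 := congrArg (fun z => Paper.mat z 1 1) h
      simp only [mat_diagGL, ent00, ent11] at h0 h1
      rw [show a = a' from Units.ext h0, show b = b' from Units.ext h1]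
    · have h0 := congrArg (fun z => Paper.mat z 0 0) h
      simp only [mat_diagGL, mat_antiGL, ent00] at h0
      exact absurd h0 a.ne_zero
    · have h0 := congrArg (fun z => Paper.mat z 0 0) h
      simp only [mat_diagGL, mat_antiGL, ent00] at h0
      exact absurd h0.symm a'.ne_zero
    · have h0 := congrArg (fun z => Paper.mat z 0 1) h
      have h1 := congrArg (fun z => Paper.mat z 1 0) h
      simp only [mat_antiGL, ent01, ent10] at h0 h1
      rw [show a = a' from Units.ext h0, show b = b' from Units.ext h1]
  have hsurj : Function.Surjective f := by
    rintro ⟨g, hg⟩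
    rw [hmem] at hg
    rcases hg with ⟨h01, h10⟩ | ⟨h00, h11⟩
    · have hdet := isUnit_det g
      rw [det_eq, h01, h10] at hdet
      simp only [zero_mul, mul_zero, sub_zero] at hdet
      have ha : IsUnit (Paper.mat g 0 0) := isUnit_of_mul_isUnit_left hdet
      have hb : IsUnit (Paper.mat g 1 1) := isUnit_of_mul_isUnit_right hdet
      refine ⟨.inl (ha.unit, hb.unit), ?_⟩
      apply Subtype.ext
      apply Units.ext
      show !![(ha.unit : ZMod ℓ), 0; 0, (hb.unit : ZMod ℓ)] = Paper.mat g
      rw [IsUnit.unit_spec, IsUnit.unit_spec, Matrix.eta_fin_two (Paper.mat g), h01, h10]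
      simp only [ent00, ent11]
    · have hdet := isUnit_det g
      rw [det_eq, h00, h11] at hdet
      simp only [zero_mul, mul_zero, zero_sub] at hdet
      have hdet' : IsUnit (Paper.mat g 0 1 * Paper.mat g 1 0) := by
        have := hdet.neg
        rwa [neg_neg] at this
      have ha : IsUnit (Paper.mat g 0 1) := isUnit_of_mul_isUnit_left hdet'
      have hb : IsUnit (Paper.mat g 1 0) := isUnit_of_mul_isUnit_right hdet'
      refine ⟨.inr (ha.unit, hb.unit), ?_⟩
      apply Subtype.ext
      apply Units.ext
      show !![0, (ha.unit : ZMod ℓ); (hb.unit : ZMod ℓ), 0] = Paper.mat g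
      rw [IsUnit.unit_spec, IsUnit.unit_spec, Matrix.eta_fin_two (Paper.mat g), h00, h11]
      simp only [ent01, ent10]
  have := Nat.card_eq_of_bijective f ⟨hinj, hsurj⟩
  rw [← this, Nat.card_sum, Nat.card_prod, card_units']
  ring

lemma mul_ent (A B : Matrix (Fin 2) (Fin 2) (ZMod ℓ)) (i j : Fin 2) :
    (A * B) i j = A i 0 * B 0 j + A i 1 * B 1 j := by
  rw [Matrix.mul_apply, Fin.sum_univ_two]

lemma mat_one : mat (1 : GL2 ℓ) = 1 := rfl

lemma inv_entries {g : GL2 ℓ} (h01 : mat g 0 1 = 0) (h10 : mat g 1 0 = 0) :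
    mat g⁻¹ 0 1 = 0 ∧ mat g⁻¹ 1 0 = 0 ∧
      mat g 0 0 * mat g⁻¹ 0 0 = 1 ∧ mat g 1 1 * mat g⁻¹ 1 1 = 1 := by
  have hAB : mat g * mat g⁻¹ = 1 := by rw [← mat_mul, mul_inv_cancel, mat_one]
  have e00 := congrArg (fun M => M 0 0) hAB
  have e01 := congrArg (fun M => M 0 1) hAB
  have e10 := congrArg (fun M => M 1 0) hAB
  have e11 := congrArg (fun M => M 1 1) hAB
  simp only [mul_ent] at e00 e01 e10 e11
  rw [h01] at e00 e01
  rw [h10] at e10 e11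
  simp only [zero_mul, add_zero, zero_add] at e00 e01 e10 e11
  rw [Matrix.one_apply_eq] at e00 e11
  rw [Matrix.one_apply_ne (by decide)] at e01
  rw [Matrix.one_apply_ne (by decide)] at e10
  have h00ne : mat g 0 0 ≠ 0 := fun h => by rw [h, zero_mul] at e00; exact one_ne_zero e00.symm
  have h11ne : mat g 1 1 ≠ 0 := fun h => by rw [h, zero_mul] at e11; exact one_ne_zero e11.symm
  refine ⟨?_, ?_, e00, e11⟩
  · exact (mul_eq_zero.mp e01).resolve_left h00ne
  · exact (mul_eq_zero.mp e10).resolve_left h11ne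

/-- The subgroup of diagonal matrices `diag(a, ±a)`. -/
def Dsub (ℓ : ℕ) [Fact ℓ.Prime] : Subgroup (GL2 ℓ) where
  carrier := {g | mat g 0 1 = 0 ∧ mat g 1 0 = 0 ∧ mat g 0 0 ^ 2 = mat g 1 1 ^ 2}
  one_mem' := by
    refine ⟨?_, ?_, ?_⟩ <;> rw [mat_one]
    · exact Matrix.one_apply_ne (by decide)
    · exact Matrix.one_apply_ne (by decide)
    · rfl
  mul_mem' := by
    rintro x y ⟨hx01, hx10, hxs⟩ ⟨hy01, hy10, hys⟩
    refine ⟨?_, ?_, ?_⟩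
    · rw [mat_mul, mul_ent, hx01, hy01, mul_zero, zero_mul, add_zero]
    · rw [mat_mul, mul_ent, hx10, hy10, mul_zero, zero_mul, add_zero]
    · simp only [mat_mul, mul_ent, hx01, hx10, hy01, hy10, mul_zero, zero_mul, add_zero,
        zero_add, mul_pow]
      rw [hxs, hys]
  inv_mem' := by
    rintro x ⟨h01, h10, hs⟩
    obtain ⟨i01, i10, i00, i11⟩ := inv_entries h01 h10
    have h00ne : mat x 0 0 ≠ 0 := fun h => by rw [h, zero_mul] at i00; exact one_ne_zero i00.symm
    refine ⟨i01, i10, ?_⟩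
    have key : mat x 0 0 ^ 2 * (mat x⁻¹ 0 0 ^ 2) = mat x 0 0 ^ 2 * (mat x⁻¹ 1 1 ^ 2) := by
      rw [← mul_pow, i00, one_pow, hs, ← mul_pow, i11, one_pow]
    exact mul_left_cancel₀ (pow_ne_zero 2 h00ne) key

lemma card_Dsub (h2 : (2 : ZMod ℓ) ≠ 0) : Nat.card (Dsub ℓ) = 2 * (ℓ - 1) := by
  classical
  haveI : NeZero ℓ := ⟨(Fact.out : ℓ.Prime).ne_zero⟩
  let f : (ZMod ℓ)ˣ × Bool → Dsub ℓ := fun p => match p with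
    | (a, false) => ⟨diagGL a a, by
        refine ⟨?_, ?_, rfl⟩ <;> rw [mat_diagGL] <;> simp only [ent01, ent10]⟩
    | (a, true) => ⟨diagGL a (-a), by
        refine ⟨?_, ?_, ?_⟩ <;> rw [mat_diagGL] <;>
          simp only [ent01, ent10, ent00, ent11, Units.val_neg, neg_sq]⟩
  have hinj : Function.Injective f := by
    have key : ∀ a a' : (ZMod ℓ)ˣ, (a : ZMod ℓ) = a' → ((a : ZMod ℓ)) = -(a' : ZMod ℓ) → False := by
      intro a a' h h'
      rw [h] at h'
      have : (2 : ZMod ℓ) * a' = 0 := by linear_combination h' 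
      rcases mul_eq_zero.mp this with hc | hc
      · exact h2 hc
      · exact a'.ne_zero hc
    rintro ⟨a, b⟩ ⟨a', b'⟩ h
    cases b <;> cases b' <;>
      simp only [f] at h <;>
      replace h := congrArg Subtype.val h <;>
      have h0 := congrArg (fun z => Paper.mat z 0 0) h <;>
      have h1 := congrArg (fun z => Paper.mat z 1 1) h <;>
      simp only [mat_diagGL, ent00, ent11, Units.val_neg] at h0 h1
    · rw [show a = a' from Units.ext h0]
    · exact absurd h1 (fun hh => key a a' h0 hh)
    · exact absurd h1 (fun hh => key a a' h0 (neg_eq_iff_eq_neg.mp hh))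
    · rw [show a = a' from Units.ext h0]
  have hsurj : Function.Surjective f := by
    rintro ⟨g, h01, h10, hs⟩
    have hdet := isUnit_det g
    rw [det_eq, h01, h10] at hdet
    simp only [zero_mul, mul_zero, sub_zero] at hdet
    have ha : IsUnit (Paper.mat g 0 0) := isUnit_of_mul_isUnit_left hdet
    have hfac : (Paper.mat g 0 0 + Paper.mat g 1 1) * (Paper.mat g 0 0 - Paper.mat g 1 1) = 0 := by
      linear_combination hs
    rcases mul_eq_zero.mp hfac with hc | hc
    · refine ⟨(ha.unit, true), ?_⟩
      apply Subtype.ext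
      apply Units.ext
      show !![(ha.unit : ZMod ℓ), 0; 0, ((-ha.unit : (ZMod ℓ)ˣ) : ZMod ℓ)] = Paper.mat g
      rw [Units.val_neg, IsUnit.unit_spec, Matrix.eta_fin_two (Paper.mat g), h01, h10,
        show Paper.mat g 1 1 = -Paper.mat g 0 0 by linear_combination hc]
      simp only [ent00]
    · refine ⟨(ha.unit, false), ?_⟩
      apply Subtype.ext
      apply Units.ext
      show !![(ha.unit : ZMod ℓ), 0; 0, (ha.unit : ZMod ℓ)] = Paper.mat g
      rw [IsUnit.unit_spec, Matrix.eta_fin_two (Paper.mat g), h01, h10,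
        show Paper.mat g 1 1 = Paper.mat g 0 0 by linear_combination -hc]
      simp only [ent00]
  have := Nat.card_eq_of_bijective f ⟨hinj, hsurj⟩
  rw [← this, Nat.card_prod, card_units', Nat.card_eq_fintype_card (α := Bool),
    Fintype.card_bool, Nat.mul_comm]


lemma trace_eq (g : GL2 ℓ) : Matrix.trace (mat g) = mat g 0 0 + mat g 1 1 :=
  Matrix.trace_fin_two _

/-- diagonal elements of a group conjugate into N_ns lie in Dsub -/
lemma diag_mem_Dsub {ε : ZMod ℓ} (h2 : (2 : ZMod ℓ) ≠ 0) (hε : ∀ t : ZMod ℓ, t ^ 2 ≠ ε)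
    {G : Subgroup (GL2 ℓ)} {a : GL2 ℓ} (hconj : ∀ g ∈ G, a * g * a⁻¹ ∈ Paper.NnsSet ℓ ε)
    {g : GL2 ℓ} (hg : g ∈ G) (hd01 : mat g 0 1 = 0) (hd10 : mat g 1 0 = 0) :
    g ∈ Dsub ℓ := by
  refine ⟨hd01, hd10, ?_⟩
  have hm := hconj g hg
  have htr := trace_conj a g
  have hdt := det_conj a g
  rw [trace_eq, trace_eq] at htr
  rw [det_eq, det_eq, hd01, hd10, mul_zero, sub_zero] at hdt
  rcases hm with ⟨x, y, hmat⟩ | ⟨x, y, hmat⟩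
  · rw [hmat] at htr hdt
    simp only [ent00, ent11, ent01, ent10] at htr hdt
    -- htr : x + x = g00 + g11 ; hdt : x*x - ε*y*y = g00*g11
    have key : (mat g 0 0 - mat g 1 1) ^ 2 = ε * (2 * y) ^ 2 := by
      linear_combination (-(mat g 0 0 + mat g 1 1 + x + x)) * htr + 4 * hdt
    by_cases hy : (2 : ZMod ℓ) * y = 0
    · have hyy : y = 0 := by
        rcases mul_eq_zero.mp hy with h | h
        · exact absurd h h2
        · exact h
      rw [hyy] at key
      have : (mat g 0 0 - mat g 1 1) ^ 2 = 0 := by rw [key]; ring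
      have := pow_eq_zero_iff (n := 2) (by norm_num) |>.mp this
      have heq : mat g 0 0 = mat g 1 1 := by linear_combination this
      rw [heq]
    · exfalso
      apply hε ((mat g 0 0 - mat g 1 1) * ((2 : ZMod ℓ) * y)⁻¹)
      rw [mul_pow, key, inv_pow]
      exact mul_inv_cancel_right₀ (pow_ne_zero 2 hy) ε
  · rw [hmat] at htr
    simp only [ent00, ent11] at htr
    have : mat g 1 1 = -(mat g 0 0) := by linear_combination -htr
    rw [this, neg_sq]

/-- scalar powers stay scalar -/
lemma scalar_pow (c : ZMod ℓ) (k : ℕ) :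
    (!![c, 0; 0, c] : Matrix (Fin 2) (Fin 2) (ZMod ℓ)) ^ k = !![c ^ k, 0; 0, c ^ k] := by
  induction k with
  | zero => simp [Matrix.one_fin_two]
  | succ n ih =>
      rw [pow_succ, ih, Matrix.mul_fin_two]
      ring_nf

/-- a group conjugate into N_ns but not into C_ns has even order -/
lemma even_card {ε : ZMod ℓ} {G : Subgroup (GL2 ℓ)} {a : GL2 ℓ}
    (hconj : ∀ g ∈ G, a * g * a⁻¹ ∈ Paper.NnsSet ℓ ε)
    (hnot : ¬ Paper.ConjSub G (Paper.CnsSet ℓ ε)) :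
    2 ∣ Nat.card G := by
  haveI : NeZero ℓ := ⟨(Fact.out : ℓ.Prime).ne_zero⟩
  have : ∃ g ∈ G, a * g * a⁻¹ ∉ Paper.CnsSet ℓ ε := by
    by_contra hcon
    push_neg at hcon
    exact hnot ⟨a, hcon⟩
  obtain ⟨g, hg, hnc⟩ := this
  set m := a * g * a⁻¹ with hm
  have hmN := hconj g hg
  have hout : ∃ x y : ZMod ℓ, mat m = !![x, -(ε * y); y, -x] := by
    rcases hmN with h | h
    · exact absurd h hnc
    · exact h
  obtain ⟨x, y, hmat⟩ := hout
  have hsq : mat (m * m) = !![x ^ 2 - ε * y ^ 2, 0; 0, x ^ 2 - ε * y ^ 2] := by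
    rw [mat_mul, hmat, Matrix.mul_fin_two]
    ring_nf
  have h2m : 2 ∣ orderOf m := by
    rcases Nat.even_or_odd (orderOf m) with he | ho
    · exact he.two_dvd
    · exfalso
      apply hnc
      obtain ⟨j, hj⟩ := ho
      have hpow : m ^ (orderOf m + 1) = m := by
        rw [pow_succ, pow_orderOf_eq_one, one_mul]
      have : (m * m) ^ (j + 1) = m := by
        rw [← pow_two, ← pow_mul, show 2 * (j + 1) = orderOf m + 1 by omega, hpow]
      refine ⟨(x ^ 2 - ε * y ^ 2) ^ (j + 1), 0, ?_⟩
      rw [← this, show mat ((m * m) ^ (j + 1)) = (mat (m * m)) ^ (j + 1) from rfl, hsq,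
        scalar_pow]
      ring_nf
  have horder : orderOf g = orderOf m := by
    refine SemiconjBy.orderOf_eq a ?_
    show a * g = m * a
    rw [hm]
    group
  exact dvd_trans (horder ▸ h2m) (Subgroup.orderOf_dvd_natCard G hg)

/-- d = diag(1, -1) -/
def dElt (ℓ : ℕ) [Fact ℓ.Prime] : GL2 ℓ := diagGL 1 (-1)

lemma mat_dElt : mat (dElt ℓ) = !![(1 : ZMod ℓ), 0; 0, -1] := by
  show mat (diagGL 1 (-1)) = _
  rw [mat_diagGL, Units.val_neg, Units.val_one]

lemma not_conj_cns {ε : ZMod ℓ} (h2 : (2 : ZMod ℓ) ≠ 0) (hε : ∀ t : ZMod ℓ, t ^ 2 ≠ ε)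
    {G : Subgroup (GL2 ℓ)} (hd : dElt ℓ ∈ G) : ¬ Paper.ConjSub G (Paper.CnsSet ℓ ε) := by
  rintro ⟨a, ha⟩
  obtain ⟨x, y, hmat⟩ := ha (dElt ℓ) hd
  have htr := trace_conj a (dElt ℓ)
  have hdt := det_conj a (dElt ℓ)
  rw [trace_eq, trace_eq, hmat, mat_dElt] at htr
  rw [det_eq, det_eq, hmat, mat_dElt] at hdt
  simp only [ent00, ent01, ent10, ent11] at htr hdt
  -- htr : x + x = 1 + -1 ; hdt : x*x - ε*y*y = 1*(-1) - 0*0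
  have hx : x = 0 := by
    have h1 : (2 : ZMod ℓ) * x = 0 := by linear_combination htr
    rcases mul_eq_zero.mp h1 with h | h
    · exact absurd h h2
    · exact h
  have hy : ε * y ^ 2 = 1 := by
    rw [hx] at hdt
    linear_combination -hdt
  have hyne : y ≠ 0 := by
    intro h
    rw [h, zero_pow (by norm_num : (2 : ℕ) ≠ 0), mul_zero] at hy
    exact one_ne_zero hy.symm
  apply hε y⁻¹
  rw [inv_pow]
  exact (eq_inv_of_mul_eq_one_left hy).symm

/-- the elements of Ns are diagonal or antidiagonal, with unit entries accordingly -/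
lemma ns_dichotomy {Ns : Subgroup (GL2 ℓ)} (hNs : (Ns : Set (GL2 ℓ)) = Paper.NsSet ℓ)
    {x : GL2 ℓ} (hx : x ∈ Ns) :
    (mat x 0 1 = 0 ∧ mat x 1 0 = 0 ∧ mat x 0 0 ≠ 0 ∧ mat x 1 1 ≠ 0) ∨
    (mat x 0 0 = 0 ∧ mat x 1 1 = 0 ∧ mat x 0 1 ≠ 0 ∧ mat x 1 0 ≠ 0) := by
  rw [mem_iff_of_coe hNs] at hx
  rcases hx with ⟨h01, h10⟩ | ⟨h00, h11⟩
  · left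
    have hdet := isUnit_det x
    rw [det_eq, h01, h10] at hdet
    simp only [zero_mul, mul_zero, sub_zero] at hdet
    exact ⟨h01, h10, (isUnit_of_mul_isUnit_left hdet).ne_zero,
      (isUnit_of_mul_isUnit_right hdet).ne_zero⟩
  · right
    have hdet := isUnit_det x
    rw [det_eq, h00, h11] at hdet
    simp only [zero_mul, mul_zero, zero_sub] at hdet
    have hdet' : IsUnit (mat x 0 1 * mat x 1 0) := by
      have := hdet.neg; rwa [neg_neg] at this
    exact ⟨h00, h11, (isUnit_of_mul_isUnit_left hdet').ne_zero,
      (isUnit_of_mul_isUnit_right hdet').ne_zero⟩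

/-- forward: the order of a subgroup of Ns belonging to Nns divides 4(ℓ-1) and is even -/
lemma forward_div {ε : ZMod ℓ} (h2 : (2 : ZMod ℓ) ≠ 0) (hε : ∀ t : ZMod ℓ, t ^ 2 ≠ ε)
    {Ns : Subgroup (GL2 ℓ)} (hNs : (Ns : Set (GL2 ℓ)) = Paper.NsSet ℓ)
    {G : Subgroup (GL2 ℓ)} (hGNs : G ≤ Ns) (hB : Paper.BelongsNns ε G) :
    Nat.card G ∣ 2 * (2 * (ℓ - 1)) ∧ 2 ∣ Nat.card G := by
  classical
  haveI : NeZero ℓ := ⟨(Fact.out : ℓ.Prime).ne_zero⟩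
  obtain ⟨⟨a, hconj⟩, hnot⟩ := hB
  refine ⟨?_, even_card hconj hnot⟩
  -- sign homomorphism
  have hone : (mat (1 : GL2 ℓ)) 0 0 ≠ 0 := by
    rw [mat_one, Matrix.one_apply_eq]
    exact one_ne_zero
  let σ : G →* ℤˣ :=
    { toFun := fun p => if mat (p : GL2 ℓ) 0 0 = 0 then (-1 : ℤˣ) else 1
      map_one' := by
        simp only [OneMemClass.coe_one]
        rw [if_neg hone]
      map_mul' := by
        rintro ⟨p, hp⟩ ⟨q, hq⟩
        simp only [MulMemClass.mk_mul_mk]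
        rcases ns_dichotomy hNs (hGNs hp) with ⟨hp01, hp10, hp00, hp11⟩ |
            ⟨hp00, hp11, hp01, hp10⟩ <;>
          rcases ns_dichotomy hNs (hGNs hq) with ⟨hq01, hq10, hq00, hq11⟩ |
              ⟨hq00, hq11, hq01, hq10⟩
        · have hpq : mat (p * q) 0 0 ≠ 0 := by
            rw [mat_mul, mul_ent, hp01, zero_mul, add_zero]
            exact mul_ne_zero hp00 hq00
          show (if mat (p * q) 0 0 = 0 then (-1 : ℤˣ) else 1) = _
          rw [if_neg hpq, if_neg hp00, if_neg hq00]
          decide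
        · have hpq : mat (p * q) 0 0 = 0 := by
            rw [mat_mul, mul_ent, hp01, hq00, mul_zero, zero_mul, add_zero]
          show (if mat (p * q) 0 0 = 0 then (-1 : ℤˣ) else 1) = _
          rw [if_pos hpq, if_neg hp00, if_pos hq00]
          decide
        · have hpq : mat (p * q) 0 0 = 0 := by
            rw [mat_mul, mul_ent, hp00, hq10, zero_mul, mul_zero, add_zero]
          show (if mat (p * q) 0 0 = 0 then (-1 : ℤˣ) else 1) = _
          rw [if_pos hpq, if_pos hp00, if_neg hq00]
          decide
        · have hpq : mat (p * q) 0 0 ≠ 0 := by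
            rw [mat_mul, mul_ent, hp00, zero_mul, zero_add]
            exact mul_ne_zero hp01 hq10
          show (if mat (p * q) 0 0 = 0 then (-1 : ℤˣ) else 1) = _
          rw [if_neg hpq, if_pos hp00, if_pos hq00]
          decide }
  have hker : (Subgroup.map G.subtype σ.ker) ≤ Dsub ℓ := by
    rintro x ⟨⟨p, hpG⟩, hpker, rfl⟩
    have hσ : (if mat p 0 0 = 0 then (-1 : ℤˣ) else 1) = 1 := hpker
    have hp00 : mat p 0 0 ≠ 0 := by
      intro h
      rw [if_pos h] at hσ
      exact absurd hσ (by decide)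
    have hdiag : mat p 0 1 = 0 ∧ mat p 1 0 = 0 := by
      rcases ns_dichotomy hNs (hGNs hpG) with ⟨h01, h10, _, _⟩ | ⟨h00, _, _, _⟩
      · exact ⟨h01, h10⟩
      · exact absurd h00 hp00
    exact diag_mem_Dsub h2 hε hconj hpG hdiag.1 hdiag.2
  have hcard_ker : Nat.card σ.ker ∣ 2 * (ℓ - 1) := by
    rw [← card_Dsub h2]
    have : Nat.card σ.ker = Nat.card (Subgroup.map G.subtype σ.ker) :=
      Nat.card_congr (Subgroup.equivMapOfInjective σ.ker G.subtype G.subtype_injective).toEquiv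
    rw [this]
    exact Subgroup.card_dvd_of_le hker
  have hcard_q : Nat.card (G ⧸ σ.ker) ∣ 2 := by
    have : Nat.card (G ⧸ σ.ker) = Nat.card σ.range :=
      Nat.card_congr (QuotientGroup.quotientKerEquivRange σ).toEquiv
    rw [this]
    have := Subgroup.card_subgroup_dvd_card σ.range
    rwa [Nat.card_eq_fintype_card (α := ℤˣ), Fintype.card_units_int] at this
  have := Subgroup.card_eq_card_quotient_mul_card_subgroup σ.ker
  rw [this]
  exact mul_dvd_mul hcard_q hcard_ker

/-! ### backward infrastructure -/

def phiHom : (ZMod ℓ)ˣ →* GL2 ℓ := Units.map (Matrix.scalar (Fin 2)).toMonoidHom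

lemma mat_phi (c : (ZMod ℓ)ˣ) :
    mat (phiHom c) = !![(c : ZMod ℓ), 0; 0, (c : ZMod ℓ)] := by
  show Matrix.scalar (Fin 2) (c : ZMod ℓ) = _
  ext i j
  fin_cases i <;> fin_cases j <;>
    simp [Matrix.scalar_apply, Matrix.diagonal, Matrix.one_apply]

lemma smul2 (c a b e f : ZMod ℓ) :
    c • (!![a, b; e, f] : Matrix (Fin 2) (Fin 2) (ZMod ℓ)) = !![c*a, c*b; c*e, c*f] := by
  ext i j
  fin_cases i <;> fin_cases j <;> simp [Matrix.smul_apply]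

lemma phi_inj : Function.Injective (phiHom (ℓ := ℓ)) := by
  intro c c' h
  have := congrArg (fun z => Paper.mat z 0 0) h
  simp only [mat_phi, ent00] at this
  exact Units.ext this

lemma mat_smul_eq (c : (ZMod ℓ)ˣ) (x : GL2 ℓ) :
    mat (phiHom c * x) = (c : ZMod ℓ) • mat x := by
  rw [mat_mul, mat_phi]
  rw [Matrix.eta_fin_two (mat x), Matrix.mul_fin_two, smul2]
  ring_nf

lemma phi_commute (c : (ZMod ℓ)ˣ) (x : GL2 ℓ) : phiHom c * x = x * phiHom c := by
  apply Units.ext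
  show mat (phiHom c * x) = mat (x * phiHom c)
  rw [mat_smul_eq, mat_mul, mat_phi, Matrix.eta_fin_two (mat x), Matrix.mul_fin_two, smul2]
  ring_nf

lemma conj_central (c : (ZMod ℓ)ˣ) (x : GL2 ℓ) : x * phiHom c * x⁻¹ = phiHom c := by
  rw [← phi_commute, mul_assoc, mul_inv_cancel, mul_one]

lemma d_sq : dElt ℓ * dElt ℓ = 1 := by
  apply Units.ext
  show mat (dElt ℓ * dElt ℓ) = mat 1
  rw [mat_mul, mat_dElt, Matrix.mul_fin_two, mat_one, Matrix.one_fin_two]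
  ring_nf

lemma d_inv : (dElt ℓ)⁻¹ = dElt ℓ := inv_eq_of_mul_eq_one_right d_sq

lemma d_not_scalar (h2 : (2 : ZMod ℓ) ≠ 0) (c : (ZMod ℓ)ˣ) : phiHom c ≠ dElt ℓ := by
  intro h
  have h00 := congrArg (fun z => Paper.mat z 0 0) h
  have h11 := congrArg (fun z => Paper.mat z 1 1) h
  simp only [mat_phi, mat_dElt, ent00, ent11] at h00 h11
  rw [h00] at h11
  exact h2 (by linear_combination h11)

/-- membership of the four standard forms in both NsSet and NnsSet -/
lemma mem_NsNns_of_form {ε : ZMod ℓ} (x : GL2 ℓ) (c : ZMod ℓ)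
    (h : mat x = !![c, 0; 0, c] ∨ mat x = !![c, 0; 0, -c] ∨
         mat x = !![0, -(ε * c); c, 0] ∨ mat x = !![0, ε * c; c, 0]) :
    x ∈ Paper.NsSet ℓ ∧ x ∈ Paper.NnsSet ℓ ε := by
  rcases h with h | h | h | h
  · exact ⟨Or.inl ⟨by rw [h, ent01], by rw [h, ent10]⟩,
      Or.inl ⟨c, 0, by rw [h, mul_zero]⟩⟩
  · exact ⟨Or.inl ⟨by rw [h, ent01], by rw [h, ent10]⟩,
      Or.inr ⟨c, 0, by rw [h, mul_zero, neg_zero]⟩⟩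
  · exact ⟨Or.inr ⟨by rw [h, ent00], by rw [h, ent11]⟩,
      Or.inr ⟨0, c, by rw [h, neg_zero]⟩⟩
  · exact ⟨Or.inr ⟨by rw [h, ent00], by rw [h, ent11]⟩,
      Or.inl ⟨0, c, by rw [h]⟩⟩

lemma card_scalSub (u : (ZMod ℓ)ˣ) :
    Nat.card (Subgroup.map (phiHom (ℓ := ℓ)) (Subgroup.zpowers u)) = orderOf u := by
  rw [← Nat.card_zpowers]
  exact (Nat.card_congr
    (Subgroup.equivMapOfInjective (Subgroup.zpowers u) phiHom phi_inj).toEquiv).symm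

section gE
variable {ε : ZMod ℓ}

lemma gE_aux1 (hε0 : ε ≠ 0) :
    (!![0, -ε; 1, 0] : Matrix (Fin 2) (Fin 2) (ZMod ℓ)) * !![0, 1; -ε⁻¹, 0] = 1 := by
  have hh : ε * ε⁻¹ = 1 := mul_inv_cancel₀ hε0
  rw [Matrix.mul_fin_two, Matrix.one_fin_two]
  simp only [mul_zero, zero_mul, mul_one, one_mul, add_zero, zero_add, neg_mul_neg, hh]

lemma gE_aux2 (hε0 : ε ≠ 0) :
    (!![0, 1; -ε⁻¹, 0] : Matrix (Fin 2) (Fin 2) (ZMod ℓ)) * !![0, -ε; 1, 0] = 1 := by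
  have hh : ε⁻¹ * ε = 1 := inv_mul_cancel₀ hε0
  rw [Matrix.mul_fin_two, Matrix.one_fin_two]
  simp only [mul_zero, zero_mul, mul_one, one_mul, add_zero, zero_add, neg_mul_neg, hh]

def gE (hε0 : ε ≠ 0) : GL2 ℓ :=
  mk2 !![0, -ε; 1, 0] !![0, 1; -ε⁻¹, 0] (gE_aux1 hε0) (gE_aux2 hε0)

lemma mat_gE (hε0 : ε ≠ 0) : mat (gE hε0) = !![0, -ε; 1, 0] := rfl

end gE

/-- main backward construction -/
lemma backward {ε : ZMod ℓ} (h2 : (2 : ZMod ℓ) ≠ 0) (hε : ∀ t : ZMod ℓ, t ^ 2 ≠ ε)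
    {Ns : Subgroup (GL2 ℓ)} (hNs : (Ns : Set (GL2 ℓ)) = Paper.NsSet ℓ)
    (hne : Even (ℓ - 1)) (hnpos : 0 < ℓ - 1)
    {k : ℕ} (hk : k ∣ 2 * (ℓ - 1)) (hkpos : 0 < k) :
    ∃ G : Subgroup (GL2 ℓ), G ≤ Ns ∧ Paper.BelongsNns ε G ∧ Nat.card G = 2 * k := by
  classical
  haveI : NeZero ℓ := ⟨(Fact.out : ℓ.Prime).ne_zero⟩
  set n := ℓ - 1 with hn
  have hε0 : ε ≠ 0 := fun h => hε 0 (by rw [h]; ring)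
  obtain ⟨z, hz⟩ := IsCyclic.exists_generator (α := (ZMod ℓ)ˣ)
  have horder : orderOf z = n := by
    rw [orderOf_eq_card_of_forall_mem_zpowers hz, Nat.card_eq_fintype_card, ZMod.card_units]
  have hpow : ∀ x : (ZMod ℓ)ˣ, ∃ s : ℕ, z ^ s = x := fun x =>
    (Submonoid.mem_powers_iff _ _).mp (mem_powers_iff_mem_zpowers.mpr (hz x))
  -- membership of small-order scalars in ⟨z^t⟩, t ∣ n
  have hmem_gen : ∀ (t k' : ℕ), n = k' * t → 0 < k' →
      ∀ v : (ZMod ℓ)ˣ, v ^ k' = 1 → v ∈ Subgroup.zpowers (z ^ t) := by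
    intro t k' hkt hk'pos v hv
    obtain ⟨s, hs⟩ := hpow v
    have hdvd : n ∣ s * k' := by
      rw [← horder]
      rw [orderOf_dvd_iff_pow_eq_one, pow_mul, hs, hv]
    rw [hkt, mul_comm k' t] at hdvd
    have ht : t ∣ s := (Nat.mul_dvd_mul_iff_right hk'pos).mp hdvd
    obtain ⟨m, hm⟩ := ht
    refine mem_powers_iff_mem_zpowers.mp ⟨m, ?_⟩
    show (z ^ t) ^ m = v
    rw [← pow_mul, ← hm, hs]
  by_cases hdvd : k ∣ n
  · -- case A : G = scalars of order k extended by d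
    set u := z ^ (n / k) with hu
    have horderu : orderOf u = k := by
      rw [hu, orderOf_pow, horder, Nat.gcd_comm, Nat.gcd_eq_left (Nat.div_dvd_of_dvd hdvd),
        Nat.div_div_self hdvd hnpos.ne']
    set A := Subgroup.map (phiHom (ℓ := ℓ)) (Subgroup.zpowers u) with hA
    have hAmem : ∀ x, x ∈ A ↔ ∃ c ∈ Subgroup.zpowers u, phiHom c = x := by
      intro x
      rw [hA, Subgroup.mem_map]
    have hd2 : dElt ℓ * dElt ℓ ∈ A := by rw [d_sq]; exact A.one_mem
    have hdc : ∀ a ∈ A, dElt ℓ * a * (dElt ℓ)⁻¹ ∈ A := by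
      intro a ha
      obtain ⟨c, hc, rfl⟩ := (hAmem a).mp ha
      rw [conj_central]
      exact (hAmem _).mpr ⟨c, hc, rfl⟩
    have hdn : dElt ℓ ∉ A := by
      intro hd
      obtain ⟨c, _, hcd⟩ := (hAmem _).mp hd
      exact d_not_scalar h2 c hcd
    obtain ⟨K, hKiff, hKcard, hAK, hdK⟩ := ext_subgroup A (dElt ℓ) hd2 hdc hdn
    have hforms : ∀ x ∈ K, x ∈ Paper.NsSet ℓ ∧ x ∈ Paper.NnsSet ℓ ε := by
      intro x hx
      rcases (hKiff x).mp hx with hxA | ⟨a, haA, rfl⟩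
      · obtain ⟨c, _, rfl⟩ := (hAmem _).mp hxA
        exact mem_NsNns_of_form _ (c : ZMod ℓ) (Or.inl (mat_phi c))
      · obtain ⟨c, _, rfl⟩ := (hAmem _).mp haA
        refine mem_NsNns_of_form _ (c : ZMod ℓ) (Or.inr (Or.inl ?_))
        rw [mat_mul, mat_phi, mat_dElt, Matrix.mul_fin_two]
        ring_nf
    refine ⟨K, fun x hx => (mem_iff_of_coe hNs x).mpr (hforms x hx).1,
      ⟨⟨1, fun g hg => ?_⟩, not_conj_cns h2 hε hdK⟩, ?_⟩
    · rw [one_mul, inv_one, mul_one]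
      exact (hforms g hg).2
    · rw [hKcard, hA, card_scalSub, horderu]
  · -- case B : k = 2k', n = k' * t with t odd, k' even
    obtain ⟨t, htk⟩ := hk
    have htodd : Odd t := by
      rcases Nat.even_or_odd t with he | ho
      · exfalso
        obtain ⟨s, hs⟩ := he
        refine hdvd ⟨s, ?_⟩
        have h2n : 2 * n = 2 * (k * s) := by rw [htk, hs]; ring
        omega
      · exact ho
    have hkeven : 2 ∣ k := by
      rcases (Nat.Prime.dvd_mul Nat.prime_two).mp ⟨n, htk.symm⟩ with h | h
      · exact h
      · exact absurd (even_iff_two_dvd.mpr h) (Nat.not_even_iff_odd.mpr htodd)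
    obtain ⟨k', hk'⟩ := hkeven
    have hkt : n = k' * t := by
      have h2n : 2 * n = 2 * (k' * t) := by rw [htk, hk']; ring
      omega
    have hk'pos : 0 < k' := by
      rcases Nat.eq_zero_or_pos k' with h | h
      · omega
      · exact h
    have hk'even : Even k' := by
      rcases Nat.even_or_odd k' with he | ho
      · exact he
      · exfalso
        have : Odd (k' * t) := ho.mul htodd
        rw [← hkt] at this
        exact (Nat.not_odd_iff_even.mpr hne) this
    have htpos : 0 < t := by
      rcases Nat.eq_zero_or_pos t with h | h
      · rw [h, Nat.mul_zero] at hkt; omega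
      · exact h
    set u := z ^ t with hu
    have horderu : orderOf u = k' := by
      rw [hu, orderOf_pow, horder, Nat.gcd_comm, Nat.gcd_eq_left ⟨k', by rw [hkt]; ring⟩, hkt,
        Nat.mul_div_cancel _ htpos]
    set μ := Subgroup.map (phiHom (ℓ := ℓ)) (Subgroup.zpowers u) with hμ
    have hμmem : ∀ x, x ∈ μ ↔ ∃ c ∈ Subgroup.zpowers u, phiHom c = x := by
      intro x
      rw [hμ, Subgroup.mem_map]
    have hmemμ : ∀ v : (ZMod ℓ)ˣ, v ^ k' = 1 → phiHom v ∈ μ := fun v hv =>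
      (hμmem _).mpr ⟨v, hmem_gen t k' hkt hk'pos v hv, rfl⟩
    have hpowμ : ∀ c ∈ Subgroup.zpowers u, c ^ k' = 1 := by
      intro c hc
      obtain ⟨m, hm⟩ := (Submonoid.mem_powers_iff _ _).mp (mem_powers_iff_mem_zpowers.mpr hc)
      rw [← hm, ← pow_mul, mul_comm m k', pow_mul, ← horderu, pow_orderOf_eq_one, one_pow]
    have hεu : IsUnit ε := Ne.isUnit hε0
    obtain ⟨s, hs⟩ := hpow hεu.unit
    obtain ⟨j, hj⟩ := htodd
    set c₀ := z ^ (s * j) with hc₀def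
    have hckey : c₀ ^ (2 * k') * hεu.unit ^ k' = 1 := by
      rw [hc₀def, ← hs, ← pow_mul, ← pow_mul, ← pow_add]
      have hE : s * j * (2 * k') + s * k' = n * s := by rw [hkt, hj]; ring
      rw [hE, pow_mul, ← horder, pow_orderOf_eq_one, one_pow]
    set w : (ZMod ℓ)ˣ := -(c₀ ^ 2 * hεu.unit) with hwdef
    have hw : w ^ k' = 1 := by
      rw [hwdef, hk'even.neg_pow, mul_pow, ← pow_mul, hckey]
    set h := phiHom c₀ * gE hε0 with hhdef
    have mat_h : mat h = !![0, -(ε * (c₀ : ZMod ℓ)); (c₀ : ZMod ℓ), 0] := by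
      rw [hhdef, mat_smul_eq, mat_gE, smul2]
      ring_nf
    have hwcoe : ((w : (ZMod ℓ)ˣ) : ZMod ℓ) = -(((c₀ : ZMod ℓ)) ^ 2 * ε) := by
      rw [hwdef, Units.val_neg, Units.val_mul, Units.val_pow_eq_pow_val, IsUnit.unit_spec]
    have hh2 : h * h = phiHom w := by
      apply Units.ext
      show mat (h * h) = mat (phiHom w)
      rw [mat_mul, mat_h, mat_phi, Matrix.mul_fin_two, hwcoe]
      ring_nf
    have hA2 : h * h ∈ μ := by rw [hh2]; exact hmemμ w hw
    have hAc : ∀ a ∈ μ, h * a * h⁻¹ ∈ μ := by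
      intro a ha
      obtain ⟨c, hc, rfl⟩ := (hμmem a).mp ha
      rw [conj_central]
      exact (hμmem _).mpr ⟨c, hc, rfl⟩
    have hAn : h ∉ μ := by
      intro hmem
      obtain ⟨c, _, hch⟩ := (hμmem _).mp hmem
      have h00 := congrArg (fun zz => Paper.mat zz 0 0) hch
      simp only [mat_phi, mat_h, ent00] at h00
      exact c.ne_zero h00
    obtain ⟨A, hAiff, hAcard, hμA, hhA⟩ := ext_subgroup μ h hA2 hAc hAn
    have hdd : dElt ℓ * dElt ℓ ∈ A := by rw [d_sq]; exact A.one_mem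
    have hconjd : ∀ x : GL2 ℓ, mat x 0 0 = 0 → mat x 1 1 = 0 →
        dElt ℓ * x * (dElt ℓ)⁻¹ = phiHom (-1) * x := by
      intro x h00 h11
      apply Units.ext
      show mat (dElt ℓ * x * (dElt ℓ)⁻¹) = mat (phiHom (-1) * x)
      rw [d_inv, mat_mul, mat_mul, mat_dElt, mat_smul_eq, Units.val_neg, Units.val_one,
        Matrix.eta_fin_two (mat x), h00, h11, smul2, Matrix.mul_fin_two, Matrix.mul_fin_two]
      ring_nf
    have hx00 : ∀ c : (ZMod ℓ)ˣ, mat (phiHom c * h) 0 0 = 0 := by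
      intro c
      rw [mat_smul_eq, mat_h, smul2, ent00, mul_zero]
    have hx11 : ∀ c : (ZMod ℓ)ˣ, mat (phiHom c * h) 1 1 = 0 := by
      intro c
      rw [mat_smul_eq, mat_h, smul2, ent11, mul_zero]
    have hdcA : ∀ a ∈ A, dElt ℓ * a * (dElt ℓ)⁻¹ ∈ A := by
      intro a ha
      rcases (hAiff a).mp ha with haμ | ⟨b, hbμ, rfl⟩
      · obtain ⟨c, hc, rfl⟩ := (hμmem a).mp haμ
        rw [conj_central]
        exact hμA ((hμmem _).mpr ⟨c, hc, rfl⟩)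
      · obtain ⟨c, hc, rfl⟩ := (hμmem b).mp hbμ
        rw [hconjd _ (hx00 c) (hx11 c), ← mul_assoc]
        refine (hAiff _).mpr (Or.inr ⟨phiHom (-1) * phiHom c, ?_, rfl⟩)
        rw [← _root_.map_mul]
        apply hmemμ
        rw [mul_pow, hk'even.neg_one_pow, one_mul]
        exact hpowμ c hc
    have hdnA : dElt ℓ ∉ A := by
      intro hd
      rcases (hAiff _).mp hd with hdμ | ⟨b, hbμ, hbd⟩
      · obtain ⟨c, _, hcd⟩ := (hμmem _).mp hdμ
        exact d_not_scalar h2 c hcd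
      · obtain ⟨c, _, rfl⟩ := (hμmem b).mp hbμ
        have h00 := congrArg (fun zz => Paper.mat zz 0 0) hbd
        simp only [mat_dElt, hx00 c, ent00] at h00
        exact one_ne_zero h00
    obtain ⟨G, hGiff, hGcard, hAG, hdG⟩ := ext_subgroup A (dElt ℓ) hdd hdcA hdnA
    have hforms : ∀ x ∈ G, x ∈ Paper.NsSet ℓ ∧ x ∈ Paper.NnsSet ℓ ε := by
      intro x hx
      rcases (hGiff x).mp hx with hxA | ⟨a, haA, rfl⟩
      · rcases (hAiff x).mp hxA with hxμ | ⟨b, hbμ, rfl⟩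
        · obtain ⟨c, _, rfl⟩ := (hμmem _).mp hxμ
          exact mem_NsNns_of_form _ (c : ZMod ℓ) (Or.inl (mat_phi c))
        · obtain ⟨c, _, rfl⟩ := (hμmem _).mp hbμ
          refine mem_NsNns_of_form _ ((c : ZMod ℓ) * (c₀ : ZMod ℓ))
            (Or.inr (Or.inr (Or.inl ?_)))
          rw [mat_smul_eq, mat_h, smul2]
          ring_nf
      · rcases (hAiff a).mp haA with haμ | ⟨b, hbμ, rfl⟩
        · obtain ⟨c, _, rfl⟩ := (hμmem _).mp haμ
          refine mem_NsNns_of_form _ (c : ZMod ℓ) (Or.inr (Or.inl ?_))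
          rw [mat_mul, mat_phi, mat_dElt, Matrix.mul_fin_two]
          ring_nf
        · obtain ⟨c, _, rfl⟩ := (hμmem _).mp hbμ
          refine mem_NsNns_of_form _ ((c : ZMod ℓ) * (c₀ : ZMod ℓ))
            (Or.inr (Or.inr (Or.inr ?_)))
          rw [mat_mul, mat_smul_eq, mat_h, smul2, mat_dElt, Matrix.mul_fin_two]
          ring_nf
    refine ⟨G, fun x hx => (mem_iff_of_coe hNs x).mpr (hforms x hx).1,
      ⟨⟨1, fun g hg => ?_⟩, not_conj_cns h2 hε hdG⟩, ?_⟩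
    · rw [one_mul, inv_one, mul_one]
      exact (hforms g hg).2
    · rw [hGcard, hAcard, hμ, card_scalSub, horderu, hk']

lemma relindex_lagrange {G K : Subgroup (GL2 ℓ)} (h : G ≤ K) :
    Nat.card G * G.relIndex K = Nat.card K := by
  haveI : NeZero ℓ := ⟨(Fact.out : ℓ.Prime).ne_zero⟩
  rw [← Nat.card_congr (Subgroup.subgroupOfEquivOfLe h).toEquiv]
  exact Subgroup.card_mul_index (G.subgroupOf K)

end prime
end S12

theorem statement_12 (ℓ : ℕ) (hℓ : Nat.Prime ℓ) (hodd : Odd ℓ) (ε : ZMod ℓ)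
    (hε : ∀ t : ZMod ℓ, t ^ 2 ≠ ε)
    (Ns : Subgroup (GL2 ℓ)) (hNs : (Ns : Set (GL2 ℓ)) = Paper.NsSet ℓ) :
    { n : ℕ | ∃ G : Subgroup (GL2 ℓ), G ≤ Ns ∧ Paper.BelongsNns ε G ∧ G.relIndex Ns = n } =
      { n : ℕ | 0 < n ∧ (ℓ - 1) / 2 ∣ n ∧ n ∣ (ℓ - 1) ^ 2 } := by
  haveI : Fact ℓ.Prime := ⟨hℓ⟩
  haveI : NeZero ℓ := ⟨hℓ.ne_zero⟩
  have hℓ2 : ℓ ≠ 2 := by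
    rintro rfl
    exact (by decide : ¬ Odd 2) hodd
  have hℓ3 : 3 ≤ ℓ := by
    have := hℓ.two_le
    omega
  have h2 : (2 : ZMod ℓ) ≠ 0 := by
    intro h
    have hc : ((2 : ℕ) : ZMod ℓ) = 0 := by exact_mod_cast h
    have hdvd := (ZMod.natCast_eq_zero_iff 2 ℓ).mp hc
    have := Nat.le_of_dvd (by norm_num) hdvd
    omega
  set n := ℓ - 1 with hn
  have hnpos : 0 < n := by omega
  have hne : Even n := by
    obtain ⟨m, hm⟩ := hodd
    exact ⟨m, by omega⟩
  obtain ⟨q, hq⟩ := hne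
  have hne' : Even n := ⟨q, hq⟩
  have hqdiv : n / 2 = q := by omega
  have hcard : Nat.card Ns = 2 * (n * n) := S12.card_Ns Ns hNs
  ext m
  simp only [Set.mem_setOf_eq]
  constructor
  · rintro ⟨G, hGNs, hB, hrel⟩
    have hlag : Nat.card G * m = Nat.card Ns := by
      rw [← hrel]
      exact S12.relindex_lagrange hGNs
    obtain ⟨hdiv4, heven⟩ := S12.forward_div h2 hε hNs hGNs hB
    obtain ⟨f, hf⟩ := heven
    obtain ⟨e, he⟩ := hdiv4
    rw [hcard] at hlag
    refine ⟨?_, ?_, ?_⟩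
    · rcases Nat.eq_zero_or_pos m with h0 | h
      · exfalso
        rw [h0, Nat.mul_zero] at hlag
        have := Nat.mul_pos hnpos hnpos
        omega
      · exact h
    · -- (ℓ-1)/2 ∣ m
      have hB2 : (2 * n) * (2 * m) = (2 * n) * (n * e) := by
        calc (2 * n) * (2 * m) = (2 * (2 * n)) * m := by ring
          _ = (Nat.card G * e) * m := by rw [he]
          _ = (Nat.card G * m) * e := by ring
          _ = (2 * (n * n)) * e := by rw [hlag]
          _ = (2 * n) * (n * e) := by ring
      have h2m : 2 * m = n * e := Nat.eq_of_mul_eq_mul_left (by omega) hB2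
      rw [hq] at h2m
      have hqe : (q + q) * e = 2 * (q * e) := by ring
      rw [hqdiv]
      exact ⟨e, by omega⟩
    · -- m ∣ (ℓ-1)^2
      have hB2 : 2 * (f * m) = 2 * (n * n) := by
        calc 2 * (f * m) = (2 * f) * m := by ring
          _ = Nat.card G * m := by rw [hf]
          _ = 2 * (n * n) := hlag
      have hfm : f * m = n * n := Nat.eq_of_mul_eq_mul_left (by omega) hB2
      exact ⟨f, by rw [show n ^ 2 = n * n from sq n, ← hfm]; ring⟩
  · rintro ⟨hmpos, hdvd1, hdvd2⟩
    obtain ⟨f, hf⟩ := hdvd2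
    obtain ⟨e, he⟩ := hdvd1
    rw [hqdiv] at he
    have hn2 : n * n = m * f := by rw [← sq n, hf]
    have hfpos : 0 < f := by
      rcases Nat.eq_zero_or_pos f with h0 | h
      · exfalso
        rw [h0, Nat.mul_zero] at hn2
        have := Nat.mul_pos hnpos hnpos
        omega
      · exact h
    have hfdvd : f ∣ 2 * n := by
      have hB2 : n * (2 * n) = n * (e * f) := by
        calc n * (2 * n) = 2 * (n * n) := by ring
          _ = 2 * (m * f) := by rw [hn2]
          _ = 2 * ((q * e) * f) := by rw [he]
          _ = (q + q) * (e * f) := by ring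
          _ = n * (e * f) := by rw [← hq]
      have h2n : 2 * n = e * f := Nat.eq_of_mul_eq_mul_left hnpos hB2
      exact ⟨e, by rw [h2n]; ring⟩
    obtain ⟨G, hGNs, hBel, hGcard⟩ := S12.backward h2 hε hNs hne' hnpos hfdvd hfpos
    refine ⟨G, hGNs, hBel, ?_⟩
    have hlag := S12.relindex_lagrange hGNs
    rw [hGcard, hcard] at hlag
    have hB2 : (2 * f) * (G.relIndex Ns) = (2 * f) * m := by
      calc (2 * f) * (G.relIndex Ns) = 2 * (n * n) := hlag
        _ = 2 * (m * f) := by rw [hn2]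
        _ = (2 * f) * m := by ring
    exact Nat.eq_of_mul_eq_mul_left (by omega) hB2
end
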